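/- arXiv:2208.11879 — 6 statements merged into one kernel-verified Lean document; each statement's English description precedes it below -/
import Mathlib

section
/- Let (r_k)_{k≥0} and (d_k)_{k≥0} be positive real sequences, let (a_k)_{k≥-1} be a non-increasing positive real sequence, and let L, A, C be positive constants such that for all k ≥ 0 one has (a_k/2)·r_k ≤ (1 + a_k²·L·A)·d_k − d_{k+1} + (L·C·a_k²)/2. Define the weighting sequence W_{-1} = 1 and W_k = W_{k-1}·a_k/(a_{k-1}·(1 + L·A·a_k²)) for k ≥ 0. Then for every K ≥ 1, min_{0 ≤ k ≤ K-1} r_k ≤ 2·d_0/(a_{-1}·K·W_{K-1}) + (L·C/(K·W_{K-1}))·∑_{k=0}^{K-1} a_k·W_k. -/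
/-- Lemma 1 of the paper.
`a` is indexed so that `aneg` plays the role of `a_{-1}`; the weighting sequence
satisfies `W_{-1} = 1`, i.e. `W 0 = a 0 / (aneg * (1 + L * A * (a 0)^2))`. -/
theorem brsgd_weighting_lemma_min
    (r d a : ℕ → ℝ) (aneg : ℝ) (L A C : ℝ)
    (hr : ∀ k, 0 < r k) (hd : ∀ k, 0 < d k)
    (ha : ∀ k, 0 < a k) (haneg : 0 < aneg)
    (ha_mono0 : a 0 ≤ aneg) (ha_mono : ∀ k, a (k + 1) ≤ a k)
    (hL : 0 < L) (hA : 0 < A) (hC : 0 < C)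
    (hineq : ∀ k, a k / 2 * r k ≤
      (1 + (a k) ^ 2 * L * A) * d k - d (k + 1) + L * C * (a k) ^ 2 / 2)
    (W : ℕ → ℝ)
    (hW0 : W 0 = 1 * (a 0 / (aneg * (1 + L * A * (a 0) ^ 2))))
    (hW : ∀ k, W (k + 1) = W k * (a (k + 1) / (a k * (1 + L * A * (a (k + 1)) ^ 2))))
    (K : ℕ) (hK : 1 ≤ K) :
    (⨅ k : Fin K, r k) ≤
      2 * d 0 / (aneg * (K : ℝ) * W (K - 1)) +
        L * C / ((K : ℝ) * W (K - 1)) * ∑ k ∈ Finset.range K, a k * W k := by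
  have hden : ∀ k, 0 < 1 + L * A * (a k) ^ 2 := by
    intro k
    nlinarith [mul_pos (mul_pos hL hA) (pow_pos (ha k) 2)]
  have hWpos : ∀ k, 0 < W k := by
    intro k
    induction k with
    | zero =>
      rw [hW0]
      have h0 := ha 0
      have h1 := hden 0
      positivity
    | succ n ih =>
      rw [hW n]
      have h0 := ha n
      have h1 := ha (n + 1)
      have h2 := hden (n + 1)
      positivity
  -- W is antitone
  have hWdec : ∀ k, W (k + 1) ≤ W k := by
    intro k
    rw [hW k]
    have hq : a (k + 1) / (a k * (1 + L * A * (a (k + 1)) ^ 2)) ≤ 1 := by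
      rw [div_le_one (mul_pos (ha k) (hden (k + 1)))]
      have h1 := ha_mono k
      have h2 := ha k
      nlinarith [mul_nonneg h2.le (mul_nonneg (mul_nonneg hL.le hA.le)
        (sq_nonneg (a (k + 1))))]
    nlinarith [hWpos k, hq]
  have hWanti : Antitone W := antitone_nat_of_succ_le hWdec
  -- the potential
  set P : ℕ → ℝ := fun k => match k with
    | 0 => d 0 / aneg
    | (n + 1) => W n * d (n + 1) / a n with hP
  have hPid : ∀ k, W k * (1 + L * A * (a k) ^ 2) * d k / a k = P k := by
    intro k
    match k with
    | 0 =>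
      show W 0 * (1 + L * A * (a 0) ^ 2) * d 0 / a 0 = d 0 / aneg
      rw [hW0]
      have h0 := (ha 0).ne'
      have h1 := (hden 0).ne'
      field_simp
    | (n + 1) =>
      show W (n+1) * (1 + L * A * (a (n+1)) ^ 2) * d (n+1) / a (n+1)
          = W n * d (n + 1) / a n
      rw [hW n]
      have h0 := (ha n).ne'
      have h1 := (ha (n+1)).ne'
      have h2 := (hden (n+1)).ne'
      field_simp
  -- key per-step inequality
  have key : ∀ k, W k / 2 * r k ≤ P k - P (k + 1) + L * C * a k * W k / 2 := by
    intro k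
    have hpos : (0:ℝ) < W k / a k := div_pos (hWpos k) (ha k)
    have h1 := mul_le_mul_of_nonneg_left (hineq k) hpos.le
    have hane := (ha k).ne'
    have e1 : W k / a k * (a k / 2 * r k) = W k / 2 * r k := by
      field_simp
    have e2 : W k / a k * ((1 + (a k) ^ 2 * L * A) * d k - d (k + 1)
          + L * C * (a k) ^ 2 / 2)
        = W k * (1 + L * A * (a k) ^ 2) * d k / a k - W k * d (k+1) / a k
          + L * C * a k * W k / 2 := by
      field_simp
    rw [e1, e2, hPid k] at h1
    have e3 : P (k + 1) = W k * d (k + 1) / a k := rfl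
    rw [e3]
    linarith
  -- sum the key inequality
  have hsum : ∑ k ∈ Finset.range K, (W k / 2 * r k)
      ≤ d 0 / aneg + ∑ k ∈ Finset.range K, L * C * a k * W k / 2 := by
    have h1 : ∑ k ∈ Finset.range K, (W k / 2 * r k)
        ≤ ∑ k ∈ Finset.range K, (P k - P (k + 1) + L * C * a k * W k / 2) :=
      Finset.sum_le_sum fun k _ => key k
    have h2 : ∑ k ∈ Finset.range K, (P k - P (k + 1) + L * C * a k * W k / 2)
        = (P 0 - P K) + ∑ k ∈ Finset.range K, L * C * a k * W k / 2 := by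
      rw [Finset.sum_add_distrib, Finset.sum_range_sub' P K]
    have hPK : 0 ≤ P K := by
      match K with
      | 0 => exact (div_pos (hd 0) haneg).le
      | (n + 1) =>
        exact (div_pos (mul_pos (hWpos n) (hd (n+1))) (ha n)).le
    have hP0 : P 0 = d 0 / aneg := rfl
    rw [h2, hP0] at h1
    linarith
  -- the infimum
  set m : ℝ := ⨅ k : Fin K, r k with hm
  haveI : Nonempty (Fin K) := ⟨⟨0, hK⟩⟩
  have hm_le : ∀ k, k < K → m ≤ r k := fun k hk =>
    ciInf_le (Finite.bddBelow_range _) (⟨k, hk⟩ : Fin K)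
  have hm_nonneg : 0 ≤ m := le_ciInf fun i => (hr i).le
  -- lower bound the weighted sum of r by m * sum W
  have hlow : m * ∑ k ∈ Finset.range K, W k / 2
      ≤ ∑ k ∈ Finset.range K, (W k / 2 * r k) := by
    rw [Finset.mul_sum]
    refine Finset.sum_le_sum fun k hk => ?_
    have hk' := Finset.mem_range.mp hk
    have := hm_le k hk'
    nlinarith [hWpos k]
  -- sum W ≥ K * W (K-1)
  have hsumW : (K : ℝ) * W (K - 1) ≤ ∑ k ∈ Finset.range K, W k := by
    calc (K : ℝ) * W (K - 1) = ∑ _k ∈ Finset.range K, W (K - 1) := by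
          rw [Finset.sum_const, Finset.card_range, nsmul_eq_mul]
      _ ≤ ∑ k ∈ Finset.range K, W k :=
          Finset.sum_le_sum fun k hk =>
            hWanti (Nat.le_sub_one_of_lt (Finset.mem_range.mp hk))
  set S : ℝ := ∑ k ∈ Finset.range K, a k * W k with hS
  have hsumaw : ∑ k ∈ Finset.range K, L * C * a k * W k / 2 = L * C * S / 2 := by
    rw [hS, Finset.mul_sum, Finset.sum_div]
    exact Finset.sum_congr rfl fun k _ => by ring
  -- combine
  have hmain : m * ((K : ℝ) * W (K - 1)) ≤ 2 * d 0 / aneg + L * C * S := by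
    have h1 : m * ((K : ℝ) * W (K - 1)) ≤ m * ∑ k ∈ Finset.range K, W k :=
      mul_le_mul_of_nonneg_left hsumW hm_nonneg
    have h2 : m * ∑ k ∈ Finset.range K, W k
        = 2 * (m * ∑ k ∈ Finset.range K, W k / 2) := by
      rw [Finset.mul_sum, Finset.mul_sum, Finset.mul_sum]
      exact Finset.sum_congr rfl fun k _ => by ring
    rw [hsumaw] at hsum
    have h3 : m * ((K : ℝ) * W (K - 1)) ≤ 2 * (d 0 / aneg + L * C * S / 2) := by
      linarith [h1, h2, hlow, hsum]
    calc m * ((K : ℝ) * W (K - 1)) ≤ 2 * (d 0 / aneg + L * C * S / 2) := h3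
      _ = 2 * d 0 / aneg + L * C * S := by ring
  have hKpos : (0:ℝ) < (K : ℝ) := by exact_mod_cast hK
  have hWK := hWpos (K - 1)
  have hKW : (0:ℝ) < (K : ℝ) * W (K - 1) := mul_pos hKpos hWK
  have hfinal : m ≤ (2 * d 0 / aneg + L * C * S) / ((K : ℝ) * W (K - 1)) := by
    rw [le_div_iff₀ hKW]; exact hmain
  refine hfinal.trans (le_of_eq ?_)
  have hanegne := haneg.ne'
  field_simp
end

section
/- Let (r_k)_{k≥0} and (d_k)_{k≥0} be positive real sequences, let (a_k)_{k≥-1} be a non-increasing positive real sequence, and let L, A, C be positive constants such that for all k ≥ 0 one has (a_k/2)·r_k ≤ (1 + a_k²·L·A)·d_k − d_{k+1} + (L·C·a_k²)/2. Define the weighting sequence W_{-1} = 1 and W_k = W_{k-1}·a_k/(a_{k-1}·(1 + L·A·a_k²)) for k ≥ 0. Then for every K ≥ 1, the weighted average (∑_{k=0}^{K-1} r_k·W_k)/(∑_{k=0}^{K-1} W_k) satisfies (∑_{k=0}^{K-1} r_k·W_k)/(∑_{k=0}^{K-1} W_k) ≤ 2·d_0/(a_{-1}·K·W_{K-1}) +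 (L·C/(K·W_{K-1}))·∑_{k=0}^{K-1} a_k·W_k. -/
lemma brsgd_step_aux (L A C rk dk dk1 ak Wk ap Wp : ℝ)
    (hak : 0 < ak) (hap : 0 < ap)
    (hid : Wk * (1 + L * A * ak ^ 2) * ap = Wp * ak)
    (hWk : 0 < Wk)
    (hineq : ak / 2 * rk ≤ (1 + ak ^ 2 * L * A) * dk - dk1 + L * C * ak ^ 2 / 2) :
    rk * Wk ≤ 2 * Wp * dk / ap - 2 * Wk * dk1 / ak + L * C * (ak * Wk) := by
  have hid2 : Wk * (1 + L * A * ak ^ 2) * ap * dk = Wp * ak * dk := by rw [hid]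
  have hmul := mul_le_mul_of_nonneg_left hineq
    (by positivity : (0:ℝ) ≤ 2 * Wk * ap)
  have key : rk * Wk * (ap * ak) ≤
      2 * Wp * dk * ak - 2 * Wk * dk1 * ap + L * C * (ak * Wk) * (ap * ak) := by
    nlinarith [hmul, hid2]
  have hpos : (0:ℝ) < ap * ak := mul_pos hap hak
  rw [show 2 * Wp * dk / ap - 2 * Wk * dk1 / ak + L * C * (ak * Wk)
      = (2 * Wp * dk * ak - 2 * Wk * dk1 * ap + L * C * (ak * Wk) * (ap * ak)) / (ap * ak) by
    field_simp]
  rw [le_div_iff₀ hpos]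
  linarith [key]

/-- Lemma 2 of the paper, weighted-average/random-iterate form.
`a` is indexed so that `aneg` plays the role of `a_{-1}`; the weighting sequence
satisfies `W_{-1} = 1`, i.e. `W 0 = a 0 / (aneg * (1 + L * A * (a 0)^2))`. -/
theorem brsgd_weighting_lemma_avg
    (r d a : ℕ → ℝ) (aneg : ℝ) (L A C : ℝ)
    (hr : ∀ k, 0 < r k) (hd : ∀ k, 0 < d k)
    (ha : ∀ k, 0 < a k) (haneg : 0 < aneg)
    (ha_mono0 : a 0 ≤ aneg) (ha_mono : ∀ k, a (k + 1) ≤ a k)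
    (hL : 0 < L) (hA : 0 < A) (hC : 0 < C)
    (hineq : ∀ k, a k / 2 * r k ≤
      (1 + (a k) ^ 2 * L * A) * d k - d (k + 1) + L * C * (a k) ^ 2 / 2)
    (W : ℕ → ℝ)
    (hW0 : W 0 = 1 * (a 0 / (aneg * (1 + L * A * (a 0) ^ 2))))
    (hW : ∀ k, W (k + 1) = W k * (a (k + 1) / (a k * (1 + L * A * (a (k + 1)) ^ 2))))
    (K : ℕ) (hK : 1 ≤ K) :
    (∑ k ∈ Finset.range K, r k * W k) / (∑ k ∈ Finset.range K, W k) ≤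
      2 * d 0 / (aneg * (K : ℝ) * W (K - 1)) +
        L * C / ((K : ℝ) * W (K - 1)) * ∑ k ∈ Finset.range K, a k * W k := by
  have hden : ∀ k, 0 < 1 + L * A * (a k) ^ 2 := fun k => by positivity
  have hWpos : ∀ k, 0 < W k := by
    intro k
    induction k with
    | zero =>
      rw [hW0]
      have := ha 0; have := hden 0
      positivity
    | succ n ih =>
      rw [hW n]
      have := ha (n+1); have := ha n; have := hden (n+1)
      positivity
  -- the telescoping sequence
  set g : ℕ → ℝ := fun k => match k with
    | 0 => 2 * d 0 / aneg
    | n+1 => 2 * W n * d (n+1) / a n with hg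
  have hstep : ∀ k, r k * W k ≤ g k - g (k+1) + L * C * (a k * W k) := by
    intro k
    cases k with
    | zero =>
      have hid : W 0 * (1 + L * A * (a 0) ^ 2) * aneg = 1 * a 0 := by
        rw [hW0]
        field_simp
      have h := brsgd_step_aux L A C (r 0) (d 0) (d 1) (a 0) (W 0) aneg 1
        (ha 0) haneg hid (hWpos 0) (hineq 0)
      simpa [hg] using h
    | succ n =>
      have hid : W (n+1) * (1 + L * A * (a (n+1)) ^ 2) * a n = W n * a (n+1) := by
        rw [hW n]
        have h1 := (ha n).ne'
        have h2 := (hden (n+1)).ne'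
        field_simp
      have h := brsgd_step_aux L A C (r (n+1)) (d (n+1)) (d (n+2)) (a (n+1)) (W (n+1))
        (a n) (W n) (ha (n+1)) (ha n) hid (hWpos (n+1)) (hineq (n+1))
      simpa [hg] using h
  obtain ⟨n, rfl⟩ : ∃ n, K = n + 1 := ⟨K - 1, (Nat.succ_pred_eq_of_pos hK).symm⟩
  have hsum : ∑ k ∈ Finset.range (n+1), r k * W k ≤
      2 * d 0 / aneg + L * C * ∑ k ∈ Finset.range (n+1), a k * W k := by
    have h1 : ∑ k ∈ Finset.range (n+1), r k * W k ≤
        ∑ k ∈ Finset.range (n+1), (g k - g (k+1) + L * C * (a k * W k)) :=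
      Finset.sum_le_sum fun k _ => hstep k
    have h2 : ∑ k ∈ Finset.range (n+1), (g k - g (k+1) + L * C * (a k * W k))
        = (g 0 - g (n+1)) + L * C * ∑ k ∈ Finset.range (n+1), a k * W k := by
      rw [Finset.sum_add_distrib, Finset.sum_range_sub' g, ← Finset.mul_sum]
    have hgK : 0 ≤ g (n+1) := by
      have := hWpos n; have := hd (n+1); have := ha n
      show (0:ℝ) ≤ 2 * W n * d (n+1) / a n
      positivity
    have hg0 : g 0 = 2 * d 0 / aneg := rfl
    calc _ ≤ _ := h1
      _ = _ := h2
      _ ≤ 2 * d 0 / aneg + L * C * ∑ k ∈ Finset.range (n+1), a k * W k := by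
        rw [hg0]; linarith
  -- W is antitone
  have hWanti : Antitone W := antitone_nat_of_succ_le (by
    intro k
    rw [hW k]
    have h1 : a (k+1) / (a k * (1 + L * A * (a (k+1)) ^ 2)) ≤ 1 := by
      rw [div_le_one (by have := ha k; have := hden (k+1); positivity)]
      nlinarith [ha_mono k, mul_nonneg (ha k).le (by positivity : (0:ℝ) ≤ L * A * (a (k+1)) ^ 2)]
    exact mul_le_of_le_one_right (hWpos k).le h1)
  have hSW : ((n:ℝ)+1) * W n ≤ ∑ k ∈ Finset.range (n+1), W k := by
    have := Finset.card_nsmul_le_sum (Finset.range (n+1)) W (W n)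
      (fun i hi => hWanti (Nat.le_of_lt_succ (Finset.mem_range.mp hi)))
    simpa [nsmul_eq_mul, add_comm] using this
  have hWnpos := hWpos n
  have hSWpos : (0:ℝ) < ((n:ℝ)+1) * W n := by positivity
  have hSrnonneg : 0 ≤ ∑ k ∈ Finset.range (n+1), r k * W k :=
    Finset.sum_nonneg fun k _ => (mul_pos (hr k) (hWpos k)).le
  have hcast : ((n+1 : ℕ) : ℝ) = (n:ℝ) + 1 := by push_cast; ring
  have hKm : (n + 1) - 1 = n := rfl
  rw [hKm, hcast]
  have hfinal : (∑ k ∈ Finset.range (n+1), r k * W k) /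
      (∑ k ∈ Finset.range (n+1), W k) ≤
      (2 * d 0 / aneg + L * C * ∑ k ∈ Finset.range (n+1), a k * W k) /
      (((n:ℝ)+1) * W n) := by
    calc (∑ k ∈ Finset.range (n+1), r k * W k) / (∑ k ∈ Finset.range (n+1), W k)
        ≤ (∑ k ∈ Finset.range (n+1), r k * W k) / (((n:ℝ)+1) * W n) := by
          gcongr
      _ ≤ _ := by gcongr
  refine hfinal.trans_eq ?_
  have hWn := hWpos n
  field_simp
end

section
/- Let (r_k)_{k≥0} and (δ_k)_{k≥0} be nonnegative real sequences, let L, A', C' > 0, and let (α_k)_{k≥0} be a positive non-increasing real sequence with ∑_{k=0}^∞ α_k² < ∞ and lim_{K→∞} 1/(K·α_{K-1}) = 0. Suppose that for all k ≥ 0 one has (α_k/2)·r_k ≤ (1 + L·A'·α_k²)·δ_k − δ_{k+1} + (L·C'·α_k²)/2. Then lim_{K→∞} min_{0 ≤ k ≤ K-1} r_k = 0. -/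
/-- deterministic core of the convergence analysis; the running minimum
`min_{0 ≤ k ≤ K-1} r_k` tends to `0` as `K → ∞`. -/
theorem brsgd_deterministic_convergence_min
    (r δ : ℕ → ℝ) (L A' C' : ℝ)
    (hr : ∀ k, 0 ≤ r k) (hδ : ∀ k, 0 ≤ δ k)
    (hL : 0 < L) (hA' : 0 < A') (hC' : 0 < C')
    (α : ℕ → ℝ) (hα_pos : ∀ k, 0 < α k) (hα_mono : ∀ k, α (k + 1) ≤ α k)
    (hα_sq : Summable fun k => (α k) ^ 2)
    (hα_lim : Filter.Tendsto (fun K : ℕ => 1 / ((K : ℝ) * α (K - 1)))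
      Filter.atTop (nhds 0))
    (hineq : ∀ k, α k / 2 * r k ≤
      (1 + L * A' * (α k) ^ 2) * δ k - δ (k + 1) + L * C' * (α k) ^ 2 / 2) :
    Filter.Tendsto (fun K : ℕ => ⨅ k : Fin K, r k) Filter.atTop (nhds 0) := by
  have hc0 : 0 < L * A' := mul_pos hL hA'
  set c := L * A' with hc
  set S := ∑' k, (α k) ^ 2 with hSdef
  have hS0 : 0 ≤ S := tsum_nonneg fun k => sq_nonneg _
  set P : ℕ → ℝ := fun k => ∏ j ∈ Finset.range k, (1 + c * (α j) ^ 2) with hPdef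
  have hP1 : ∀ k, 1 ≤ P k := by
    intro k
    induction k with
    | zero => simp [hPdef]
    | succ n ih =>
      have : P (n + 1) = P n * (1 + c * (α n) ^ 2) := Finset.prod_range_succ _ _
      rw [this]
      have h1 : (1:ℝ) ≤ 1 + c * α n ^ 2 := by nlinarith [sq_nonneg (α n)]
      nlinarith [mul_le_mul ih h1 zero_le_one (by linarith : (0:ℝ) ≤ P n)]
  have hPpos : ∀ k, 0 < P k := fun k => lt_of_lt_of_le one_pos (hP1 k)
  have hPsucc : ∀ k, P (k + 1) = P k * (1 + c * (α k) ^ 2) := fun k =>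
    Finset.prod_range_succ _ _
  set E := Real.exp (c * S) with hE
  have hPle : ∀ k, P k ≤ E := by
    intro k
    have h1 : P k ≤ ∏ j ∈ Finset.range k, Real.exp (c * (α j) ^ 2) := by
      apply Finset.prod_le_prod
      · intro j _; nlinarith [sq_nonneg (α j), hc0.le]
      · intro j _
        have := Real.add_one_le_exp (c * (α j) ^ 2)
        linarith
    have h2 : (∏ j ∈ Finset.range k, Real.exp (c * (α j) ^ 2)) =
        Real.exp (∑ j ∈ Finset.range k, c * (α j) ^ 2) := (Real.exp_sum _ _).symm
    have h3 : (∑ j ∈ Finset.range k, c * (α j) ^ 2) ≤ c * S := by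
      rw [← Finset.mul_sum]
      apply mul_le_mul_of_nonneg_left _ hc0.le
      exact Summable.sum_le_tsum _ (fun j _ => sq_nonneg _) hα_sq
    calc P k ≤ Real.exp (∑ j ∈ Finset.range k, c * (α j) ^ 2) := h2 ▸ h1
      _ ≤ E := Real.exp_le_exp.2 h3
  -- key per-step inequality after dividing by P (k+1)
  have hkey : ∀ k, α k / 2 * r k / P (k + 1) ≤
      δ k / P k - δ (k + 1) / P (k + 1) + L * C' / 2 * (α k) ^ 2 / P (k + 1) := by
    intro k
    have hp := hPpos (k + 1)
    have hpk := hPpos k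
    have h := hineq k
    have hfac : 0 < 1 + c * (α k) ^ 2 := by nlinarith [sq_nonneg (α k), hc0.le]
    have step1 : (α k / 2 * r k + δ (k + 1)) / P (k + 1) ≤
        ((1 + c * (α k) ^ 2) * δ k + L * C' * (α k) ^ 2 / 2) / P (k + 1) := by
      apply div_le_div_of_nonneg_right ?_ hp.le
      linarith
    have step2 : ((1 + c * (α k) ^ 2) * δ k + L * C' * (α k) ^ 2 / 2) / P (k + 1) =
        δ k / P k + L * C' / 2 * (α k) ^ 2 / P (k + 1) := by
      rw [hPsucc k]
      field_simp
    rw [step2, add_div] at step1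
    linarith
  -- bound for ∑_{k<K} α_k r_k
  set B := 2 * E * (δ 0 + L * C' / 2 * S) with hB
  have hB0 : 0 ≤ B := by
    have hE0 : 0 < E := Real.exp_pos _
    have : 0 ≤ L * C' / 2 * S := by positivity
    nlinarith [hδ 0]
  have hsum : ∀ K : ℕ, (∑ k ∈ Finset.range K, α k * r k) ≤ B := by
    intro K
    have hsum1 : (∑ k ∈ Finset.range K, α k / 2 * r k / P (k + 1)) ≤
        δ 0 + L * C' / 2 * S := by
      have := Finset.sum_le_sum (fun k (_ : k ∈ Finset.range K) => hkey k)
      have htel : (∑ k ∈ Finset.range K, (δ k / P k - δ (k + 1) / P (k + 1))) =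
          δ 0 / P 0 - δ K / P K := Finset.sum_range_sub' (fun k => δ k / P k) K
      have h2 : (∑ k ∈ Finset.range K, L * C' / 2 * (α k) ^ 2 / P (k + 1)) ≤
          L * C' / 2 * S := by
        have : ∀ k ∈ Finset.range K, L * C' / 2 * (α k) ^ 2 / P (k + 1) ≤
            L * C' / 2 * (α k) ^ 2 := by
          intro k _
          apply div_le_self (by positivity) (hP1 _)
        calc (∑ k ∈ Finset.range K, L * C' / 2 * (α k) ^ 2 / P (k + 1)) ≤
            ∑ k ∈ Finset.range K, L * C' / 2 * (α k) ^ 2 :=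
              Finset.sum_le_sum this
          _ = L * C' / 2 * ∑ k ∈ Finset.range K, (α k) ^ 2 := by
              rw [Finset.mul_sum]
          _ ≤ L * C' / 2 * S := by
              apply mul_le_mul_of_nonneg_left _ (by positivity)
              exact Summable.sum_le_tsum _ (fun j _ => sq_nonneg _) hα_sq
      have hδK : 0 ≤ δ K / P K := div_nonneg (hδ K) (hPpos K).le
      have hP0 : P 0 = 1 := Finset.prod_range_zero _
      rw [Finset.sum_add_distrib, htel, hP0] at this
      simp only [div_one] at this
      linarith
    have hterm : ∀ k ∈ Finset.range K, α k * r k ≤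
        2 * E * (α k / 2 * r k / P (k + 1)) := by
      intro k _
      have hp := hPpos (k + 1)
      have hnum : 0 ≤ α k / 2 * r k := mul_nonneg (by linarith [hα_pos k]) (hr k)
      have h1 : α k / 2 * r k / E ≤ α k / 2 * r k / P (k + 1) :=
        div_le_div_of_nonneg_left hnum hp (hPle (k + 1))
      have hE0 : 0 < E := Real.exp_pos _
      calc α k * r k = 2 * E * (α k / 2 * r k / E) := by
            field_simp
            try ring
        _ ≤ 2 * E * (α k / 2 * r k / P (k + 1)) := by
            exact mul_le_mul_of_nonneg_left h1 (mul_nonneg (by norm_num) hE0.le)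
    calc (∑ k ∈ Finset.range K, α k * r k) ≤
        ∑ k ∈ Finset.range K, 2 * E * (α k / 2 * r k / P (k + 1)) :=
          Finset.sum_le_sum hterm
      _ = 2 * E * ∑ k ∈ Finset.range K, α k / 2 * r k / P (k + 1) := by
          rw [Finset.mul_sum]
      _ ≤ 2 * E * (δ 0 + L * C' / 2 * S) := by
          exact mul_le_mul_of_nonneg_left hsum1
            (mul_nonneg (by norm_num) (Real.exp_pos _).le)
  -- α is antitone
  have hanti : ∀ i j : ℕ, i ≤ j → α j ≤ α i :=
    fun i j h => antitone_nat_of_succ_le hα_mono h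
  -- the min is nonneg
  have hm0 : ∀ K : ℕ, 0 ≤ ⨅ k : Fin K, r k := fun K =>
    Real.iInf_nonneg fun k => hr k
  -- bound the min
  have hbound : ∀ K : ℕ, (⨅ k : Fin K, r k) ≤ B * (1 / ((K : ℝ) * α (K - 1))) := by
    intro K
    rcases Nat.eq_zero_or_pos K with h0 | hK
    · subst h0
      simp [Real.iInf_of_isEmpty]
    · have hKα : 0 < (K : ℝ) * α (K - 1) :=
        mul_pos (by exact_mod_cast hK) (hα_pos _)
      set m := ⨅ k : Fin K, r k with hm
      have hmle : ∀ k : Fin K, m ≤ r k := by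
        intro k
        apply ciInf_le
        exact ⟨0, fun x ⟨i, hi⟩ => hi ▸ hr i⟩
      have hlow : (K : ℝ) * α (K - 1) * m ≤ ∑ k ∈ Finset.range K, α k * r k := by
        have : ∀ k ∈ Finset.range K, α (K - 1) * m ≤ α k * r k := by
          intro k hk
          rw [Finset.mem_range] at hk
          have h1 : α (K - 1) ≤ α k := hanti k (K - 1) (Nat.le_sub_one_of_lt hk)
          have h2 : m ≤ r k := hmle ⟨k, hk⟩
          exact mul_le_mul h1 h2 (hm0 K) (hα_pos k).le
        calc (K : ℝ) * α (K - 1) * m = ∑ _k ∈ Finset.range K, α (K - 1) * m := by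
              rw [Finset.sum_const, Finset.card_range, nsmul_eq_mul]; ring
          _ ≤ ∑ k ∈ Finset.range K, α k * r k := Finset.sum_le_sum this
      have : (K : ℝ) * α (K - 1) * m ≤ B := le_trans hlow (hsum K)
      rw [mul_one_div]
      rw [le_div_iff₀ hKα]
      linarith [this]
  -- squeeze
  have hg : Filter.Tendsto (fun K : ℕ => B * (1 / ((K : ℝ) * α (K - 1))))
      Filter.atTop (nhds 0) := by
    have := hα_lim.const_mul B
    simpa using this
  exact squeeze_zero hm0 hbound hg
end

section
/- Let (r_k)_{k≥0} and (δ_k)_{k≥0} be nonnegative real sequences, let L, A', C' > 0, and let (α_k)_{k≥0} be a positive non-increasing real sequence with ∑_{k=0}^∞ α_k² < ∞ and lim_{K→∞} 1/(K·α_{K-1}) = 0. Suppose that for all k ≥ 0 one has (α_k/2)·r_k ≤ (1 + L·A'·α_k²)·δ_k − δ_{k+1} + (L·C'·α_k²)/2. Define W_{-1} = 1 and W_k = W_{k-1}·α_k/(α_{k-1}·(1 + L·A'·α_k²)) for k ≥ 0 (with the convention α_{-1} := α_0). Then lim_{K→∞} (∑_{k=0}^{K-1} r_k·W_k)/(∑_{k=0}^{K-1}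 W_k) = 0. -/
/-- deterministic core of the random-iterate convergence analysis:
the weighted averages `(∑_{k<K} r_k W_k) / (∑_{k<K} W_k)` tend to `0`.
With the convention `α_{-1} := α_0` and `W_{-1} = 1`, the weighting sequence
satisfies `W 0 = α 0 / (α 0 * (1 + L * A' * (α 0)^2))`. -/
theorem brsgd_deterministic_convergence_avg
    (r δ : ℕ → ℝ) (L A' C' : ℝ)
    (hr : ∀ k, 0 ≤ r k) (hδ : ∀ k, 0 ≤ δ k)
    (hL : 0 < L) (hA' : 0 < A') (hC' : 0 < C')
    (α : ℕ → ℝ) (hα_pos : ∀ k, 0 < α k) (hα_mono : ∀ k, α (k + 1) ≤ α k)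
    (hα_sq : Summable fun k => (α k) ^ 2)
    (hα_lim : Filter.Tendsto (fun K : ℕ => 1 / ((K : ℝ) * α (K - 1)))
      Filter.atTop (nhds 0))
    (hineq : ∀ k, α k / 2 * r k ≤
      (1 + L * A' * (α k) ^ 2) * δ k - δ (k + 1) + L * C' * (α k) ^ 2 / 2)
    (W : ℕ → ℝ)
    (hW0 : W 0 = 1 * (α 0 / (α 0 * (1 + L * A' * (α 0) ^ 2))))
    (hW : ∀ k, W (k + 1) = W k * (α (k + 1) / (α k * (1 + L * A' * (α (k + 1)) ^ 2)))) :
    Filter.Tendsto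
      (fun K : ℕ => (∑ k ∈ Finset.range K, r k * W k) / (∑ k ∈ Finset.range K, W k))
      Filter.atTop (nhds 0) := by
  have hα0 : 0 < α 0 := hα_pos 0
  set c := L * A' with hc
  have hc0 : 0 < c := mul_pos hL hA'
  set Q : ℕ → ℝ := fun k => ∏ j ∈ Finset.range k, (1 + c * α j ^ 2) with hQdef
  have hQpos : ∀ k, 0 < Q k := fun k => Finset.prod_pos (fun j _ => by positivity)
  have hQ1 : ∀ k, 1 ≤ Q k := by
    intro k
    show (1:ℝ) ≤ ∏ j ∈ Finset.range k, (1 + c * α j ^ 2)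
    calc (1:ℝ) = ∏ _j ∈ Finset.range k, (1:ℝ) := by simp
      _ ≤ ∏ j ∈ Finset.range k, (1 + c * α j ^ 2) :=
        Finset.prod_le_prod (fun j _ => zero_le_one) (fun j _ => by nlinarith [sq_nonneg (α j)])
  have hQsucc : ∀ k, Q (k + 1) = Q k * (1 + c * α k ^ 2) := fun k =>
    Finset.prod_range_succ _ _
  set S := ∑' k, (α k) ^ 2 with hS
  have hS0 : 0 ≤ S := tsum_nonneg (fun k => sq_nonneg _)
  have hpartial : ∀ K, ∑ k ∈ Finset.range K, (α k) ^ 2 ≤ S := fun K =>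
    Summable.sum_le_tsum _ (fun i _ => sq_nonneg _) hα_sq
  set M := Real.exp (c * S) with hM
  have hM1 : 1 ≤ M := Real.one_le_exp (by positivity)
  have hQleM : ∀ k, Q k ≤ M := by
    intro k
    calc Q k ≤ ∏ j ∈ Finset.range k, Real.exp (c * α j ^ 2) := by
          apply Finset.prod_le_prod (fun j _ => by positivity)
          intro j _
          rw [add_comm]
          exact Real.add_one_le_exp _
      _ = Real.exp (∑ j ∈ Finset.range k, c * α j ^ 2) := (Real.exp_sum _ _).symm
      _ ≤ M := by
          apply Real.exp_le_exp.mpr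
          rw [← Finset.mul_sum]
          exact mul_le_mul_of_nonneg_left (hpartial k) hc0.le
  have hWeq : ∀ k, W k = α k / (α 0 * Q (k + 1)) := by
    intro k
    induction k with
    | zero =>
      rw [hW0]
      have hq1 : Q 1 = 1 + c * α 0 ^ 2 := by simp [hQdef]
      rw [hq1]; ring
    | succ n ih =>
      rw [hW n, ih, hQsucc (n + 1)]
      have h1 : α n ≠ 0 := (hα_pos n).ne'
      have h2 : α 0 ≠ 0 := hα0.ne'
      have h3 : Q (n + 1) ≠ 0 := (hQpos _).ne'
      have h4 : (1 + c * α (n + 1) ^ 2) ≠ 0 := by positivity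
      field_simp
  have hWpos : ∀ k, 0 < W k := by
    intro k
    rw [hWeq k]
    exact div_pos (hα_pos k) (mul_pos hα0 (hQpos _))
  -- per-step bound
  have hstep : ∀ k, r k * W k ≤
      2 / α 0 * (δ k / Q k - δ (k + 1) / Q (k + 1)) + L * C' / α 0 * α k ^ 2 := by
    intro k
    have hq := hQpos k
    have hq' := hQpos (k + 1)
    have ht : (0:ℝ) < 2 / (α 0 * Q (k + 1)) := by positivity
    have h1 := mul_le_mul_of_nonneg_right (hineq k) ht.le
    have hlhs : α k / 2 * r k * (2 / (α 0 * Q (k + 1))) = r k * W k := by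
      rw [hWeq k]; field_simp
    have hrhs : ((1 + L * A' * α k ^ 2) * δ k - δ (k + 1) + L * C' * α k ^ 2 / 2) *
        (2 / (α 0 * Q (k + 1)))
        = 2 / α 0 * (δ k / Q k - δ (k + 1) / Q (k + 1)) + L * C' * α k ^ 2 / (α 0 * Q (k + 1)) := by
      rw [hQsucc k, ← hc]
      have h2 : α 0 ≠ 0 := hα0.ne'
      have h3 : Q k ≠ 0 := hq.ne'
      have h4 : (1 + c * α k ^ 2) ≠ 0 := by positivity
      field_simp
    have hlast : L * C' * α k ^ 2 / (α 0 * Q (k + 1)) ≤ L * C' / α 0 * α k ^ 2 := by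
      have : L * C' * α k ^ 2 / (α 0 * Q (k + 1)) ≤ L * C' * α k ^ 2 / (α 0 * 1) := by
        apply div_le_div_of_nonneg_left (by positivity) (by positivity)
        have := hQ1 (k + 1)
        nlinarith
      calc L * C' * α k ^ 2 / (α 0 * Q (k + 1)) ≤ L * C' * α k ^ 2 / (α 0 * 1) := this
        _ = L * C' / α 0 * α k ^ 2 := by rw [mul_one]; ring
    calc r k * W k = α k / 2 * r k * (2 / (α 0 * Q (k + 1))) := hlhs.symm
      _ ≤ ((1 + L * A' * α k ^ 2) * δ k - δ (k + 1) + L * C' * α k ^ 2 / 2) *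
          (2 / (α 0 * Q (k + 1))) := h1
      _ = 2 / α 0 * (δ k / Q k - δ (k + 1) / Q (k + 1)) +
          L * C' * α k ^ 2 / (α 0 * Q (k + 1)) := hrhs
      _ ≤ _ := by linarith
  -- numerator bound
  set B := 2 / α 0 * δ 0 + L * C' / α 0 * S with hBdef
  have hB0 : 0 ≤ B :=
    add_nonneg (mul_nonneg (by positivity) (hδ 0)) (mul_nonneg (by positivity) hS0)
  have hnum : ∀ K, ∑ k ∈ Finset.range K, r k * W k ≤ B := by
    intro K
    calc ∑ k ∈ Finset.range K, r k * W k
        ≤ ∑ k ∈ Finset.range K,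
            (2 / α 0 * (δ k / Q k - δ (k + 1) / Q (k + 1)) + L * C' / α 0 * α k ^ 2) :=
          Finset.sum_le_sum (fun k _ => hstep k)
      _ = 2 / α 0 * (δ 0 / Q 0 - δ K / Q K) +
          L * C' / α 0 * ∑ k ∈ Finset.range K, α k ^ 2 := by
          rw [Finset.sum_add_distrib, ← Finset.mul_sum, ← Finset.mul_sum,
            Finset.sum_range_sub' (fun i => δ i / Q i)]
      _ ≤ B := by
          have hQ0 : Q 0 = 1 := by simp [hQdef]
          have h1 : δ 0 / Q 0 - δ K / Q K ≤ δ 0 := by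
            rw [hQ0, div_one]
            have : 0 ≤ δ K / Q K := div_nonneg (hδ K) (hQpos K).le
            linarith
          have h2 : (0:ℝ) ≤ 2 / α 0 := by positivity
          have h3 : (0:ℝ) ≤ L * C' / α 0 := by positivity
          have t1 := mul_le_mul_of_nonneg_left h1 h2
          have t2 := mul_le_mul_of_nonneg_left (hpartial K) h3
          rw [hBdef]; linarith
  -- denominator bound
  have hanti : Antitone α := antitone_nat_of_succ_le hα_mono
  have hden : ∀ K : ℕ, (K : ℝ) * α (K - 1) / (α 0 * M) ≤ ∑ k ∈ Finset.range K, W k := by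
    intro K
    calc (K : ℝ) * α (K - 1) / (α 0 * M)
        = ∑ _k ∈ Finset.range K, α (K - 1) / (α 0 * M) := by
          rw [Finset.sum_const, Finset.card_range, nsmul_eq_mul]; ring
      _ ≤ ∑ k ∈ Finset.range K, W k := by
          apply Finset.sum_le_sum
          intro k hk
          rw [hWeq k]
          have hk' : k ≤ K - 1 := Nat.le_pred_of_lt (Finset.mem_range.mp hk)
          exact div_le_div₀ (hα_pos k).le (hanti hk') (mul_pos hα0 (hQpos (k + 1)))
            (mul_le_mul_of_nonneg_left (hQleM (k + 1)) hα0.le)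
  -- squeeze
  have hg : Filter.Tendsto (fun K : ℕ => B * (α 0 * M) * (1 / ((K : ℝ) * α (K - 1))))
      Filter.atTop (nhds 0) := by
    have := hα_lim.const_mul (B * (α 0 * M))
    simpa using this
  apply tendsto_of_tendsto_of_tendsto_of_le_of_le' tendsto_const_nhds hg
  · filter_upwards with K
    exact div_nonneg (Finset.sum_nonneg fun k _ => mul_nonneg (hr k) (hWpos k).le)
      (Finset.sum_nonneg fun k _ => (hWpos k).le)
  · filter_upwards [Filter.eventually_ge_atTop 1] with K hK
    have hKpos : (0:ℝ) < K := by exact_mod_cast hK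
    have hM0 : (0:ℝ) < M := lt_of_lt_of_le one_pos hM1
    have hdpos : 0 < (K : ℝ) * α (K - 1) / (α 0 * M) :=
      div_pos (mul_pos hKpos (hα_pos _)) (mul_pos hα0 hM0)
    have hdenpos : 0 < ∑ k ∈ Finset.range K, W k := lt_of_lt_of_le hdpos (hden K)
    calc (∑ k ∈ Finset.range K, r k * W k) / (∑ k ∈ Finset.range K, W k)
        ≤ B / (∑ k ∈ Finset.range K, W k) :=
          div_le_div₀ hB0 (hnum K) hdenpos le_rfl
      _ ≤ B / ((K : ℝ) * α (K - 1) / (α 0 * M)) :=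
          div_le_div_of_nonneg_left hB0 hdpos (hden K)
      _ = B * (α 0 * M) * (1 / ((K : ℝ) * α (K - 1))) := by
          field_simp
end

section
/- Let (r_k)_{k≥0} and (δ_k)_{k≥0} be nonnegative real sequences, let L, A', C' > 0, and let (α_k)_{k≥0} be a positive non-increasing real sequence. Suppose that for all k ≥ 0 one has (α_k/2)·r_k ≤ (1 + L·A'·α_k²)·δ_k − δ_{k+1} + (L·C'·α_k²)/2. Then for every K ≥ 1, setting Q_K := ∑_{k=0}^{K-1} α_k², one has min_{0 ≤ k ≤ K-1} r_k ≤ exp(L·A'·Q_K)·(2·δ_0 + L·C'·Q_K)/(K·α_{K-1}). -/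
/-- deterministic core of the explicit convergence-rate bound,
with `Q_K = ∑_{k=0}^{K-1} α_k²`. -/
theorem brsgd_deterministic_rate_min
    (r δ : ℕ → ℝ) (L A' C' : ℝ)
    (hr : ∀ k, 0 ≤ r k) (hδ : ∀ k, 0 ≤ δ k)
    (hL : 0 < L) (hA' : 0 < A') (hC' : 0 < C')
    (α : ℕ → ℝ) (hα_pos : ∀ k, 0 < α k) (hα_mono : ∀ k, α (k + 1) ≤ α k)
    (hineq : ∀ k, α k / 2 * r k ≤
      (1 + L * A' * (α k) ^ 2) * δ k - δ (k + 1) + L * C' * (α k) ^ 2 / 2)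
    (K : ℕ) (hK : 1 ≤ K) :
    (⨅ k : Fin K, r k) ≤
      Real.exp (L * A' * ∑ k ∈ Finset.range K, (α k) ^ 2) *
          (2 * δ 0 + L * C' * ∑ k ∈ Finset.range K, (α k) ^ 2) /
        ((K : ℝ) * α (K - 1)) := by
  have hKfin : Nonempty (Fin K) := ⟨⟨0, hK⟩⟩
  set Q : ℝ := ∑ k ∈ Finset.range K, (α k) ^ 2 with hQdef
  set E : ℝ := Real.exp (L * A' * Q) with hEdef
  set P : ℕ → ℝ := fun n => ∏ j ∈ Finset.range n, (1 + L * A' * (α j) ^ 2) with hPdef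
  have hc_nonneg : ∀ j : ℕ, 0 ≤ L * A' * (α j) ^ 2 := fun j => by positivity
  have hPsucc : ∀ n, P (n + 1) = P n * (1 + L * A' * (α n) ^ 2) := fun n =>
    Finset.prod_range_succ _ _
  have hP1 : ∀ n, 1 ≤ P n := by
    intro n
    induction n with
    | zero => simp [hPdef]
    | succ n ih =>
      rw [hPsucc n]
      nlinarith [hc_nonneg n]
  have hPpos : ∀ n, 0 < P n := fun n => lt_of_lt_of_le one_pos (hP1 n)
  have hPmono : ∀ m n, m ≤ n → P m ≤ P n := by
    have : Monotone P := monotone_nat_of_le_succ (fun n => by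
      rw [hPsucc n]; nlinarith [hc_nonneg n, hPpos n])
    exact fun m n h => this h
  have hPE : P K ≤ E := by
    have h1 : P K ≤ ∏ j ∈ Finset.range K, Real.exp (L * A' * (α j) ^ 2) := by
      refine Finset.prod_le_prod (fun j _ => by linarith [hc_nonneg j]) (fun j _ => ?_)
      have := Real.add_one_le_exp (L * A' * (α j) ^ 2)
      linarith
    calc P K ≤ ∏ j ∈ Finset.range K, Real.exp (L * A' * (α j) ^ 2) := h1
      _ = Real.exp (∑ j ∈ Finset.range K, L * A' * (α j) ^ 2) := (Real.exp_sum _ _).symm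
      _ = E := by rw [hEdef, ← Finset.mul_sum]
  have hEpos : 0 < E := Real.exp_pos _
  set m : ℝ := ⨅ k : Fin K, r k with hmdef
  have hm_nonneg : 0 ≤ m := le_ciInf (fun k => hr k)
  have hm_le : ∀ k, k < K → m ≤ r k := by
    intro k hk
    exact ciInf_le (Set.Finite.bddBelow (Set.finite_range fun i : Fin K => r i)) (⟨k, hk⟩ : Fin K)
  -- α antitone
  have hα_anti : ∀ i j : ℕ, i ≤ j → α j ≤ α i := by
    intro i j hij
    exact antitone_nat_of_succ_le hα_mono hij
  have hαK : 0 < α (K - 1) := hα_pos _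
  -- key termwise bound
  have key : ∀ k ∈ Finset.range K,
      α (K - 1) / 2 * m / E ≤ δ k / P k - δ (k + 1) / P (k + 1) + L * C' * (α k) ^ 2 / 2 := by
    intro k hk
    rw [Finset.mem_range] at hk
    have hsucc : P (k + 1) = P k * (1 + L * A' * (α k) ^ 2) := Finset.prod_range_succ _ _
    have hPk := hPpos k
    have hPk1 := hPpos (k + 1)
    have step1 : α k / 2 * r k / P (k + 1) ≤
        δ k / P k - δ (k + 1) / P (k + 1) + L * C' * (α k) ^ 2 / 2 := by
      have hdk : δ k / P k = ((1 + L * A' * (α k) ^ 2) * δ k) / P (k + 1) := by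
        rw [hsucc]; field_simp
      rw [hdk, div_sub_div_same]
      have h1 : α k / 2 * r k / P (k + 1) ≤
          ((1 + L * A' * (α k) ^ 2) * δ k - δ (k + 1) + L * C' * (α k) ^ 2 / 2) / P (k + 1) :=
        div_le_div_of_nonneg_right (hineq k) hPk1.le
      have h2 : ((1 + L * A' * (α k) ^ 2) * δ k - δ (k + 1) + L * C' * (α k) ^ 2 / 2) / P (k + 1)
          ≤ ((1 + L * A' * (α k) ^ 2) * δ k - δ (k + 1)) / P (k + 1)
            + L * C' * (α k) ^ 2 / 2 := by
        rw [add_div]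
        have hd0 : 0 ≤ L * C' * (α k) ^ 2 / 2 := by positivity
        have : L * C' * (α k) ^ 2 / 2 / P (k + 1) ≤ L * C' * (α k) ^ 2 / 2 := by
          apply div_le_self hd0 (hP1 _)
        linarith
      linarith
    refine le_trans ?_ step1
    have hkK1 : K - 1 ≤ k ∨ k ≤ K - 1 := le_total _ _
    have hαle : α (K - 1) ≤ α k := hα_anti k (K - 1) (Nat.le_sub_one_of_lt hk)
    have hnum : α (K - 1) / 2 * m ≤ α k / 2 * r k := by
      have := hm_le k hk
      have := hα_pos k
      nlinarith [hr k, hm_nonneg, hα_pos (K - 1)]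
    have hden : P (k + 1) ≤ E := le_trans (hPmono (k + 1) K hk) hPE
    exact div_le_div₀ (mul_nonneg (by linarith [hα_pos k] : (0:ℝ) ≤ α k / 2) (hr k)) hnum hPk1 hden
  -- sum up
  have hsum := Finset.sum_le_sum key
  have hLHS : ∑ _k ∈ Finset.range K, (α (K - 1) / 2 * m / E) =
      (K : ℝ) * (α (K - 1) / 2 * m / E) := by
    rw [Finset.sum_const, Finset.card_range, nsmul_eq_mul]
  have hRHS : ∑ k ∈ Finset.range K,
      (δ k / P k - δ (k + 1) / P (k + 1) + L * C' * (α k) ^ 2 / 2)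
      = (δ 0 / P 0 - δ K / P K) + L * C' / 2 * Q := by
    rw [Finset.sum_add_distrib, Finset.sum_range_sub' (fun k => δ k / P k)]
    congr 1
    rw [hQdef, Finset.mul_sum]
    refine Finset.sum_congr rfl (fun j _ => by ring)
  have hP0 : P 0 = 1 := Finset.prod_range_zero _
  have hfinal : (K : ℝ) * (α (K - 1) / 2 * m / E) ≤ δ 0 + L * C' / 2 * Q := by
    rw [hLHS, hRHS, hP0] at hsum
    have hδK : 0 ≤ δ K / P K := div_nonneg (hδ K) (hPpos K).le
    simpa using le_trans hsum (by linarith)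
  -- conclude
  have hKpos : (0 : ℝ) < (K : ℝ) := by exact_mod_cast hK
  rw [le_div_iff₀ (by positivity : (0 : ℝ) < (K : ℝ) * α (K - 1))]
  have hexp : (K : ℝ) * (α (K - 1) / 2 * m / E) = (K : ℝ) * α (K - 1) * m / (2 * E) := by
    ring
  rw [hexp] at hfinal
  have h2 : (K : ℝ) * α (K - 1) * m ≤ 2 * E * (δ 0 + L * C' / 2 * Q) := by
    rw [div_le_iff₀ (by positivity : (0 : ℝ) < 2 * E)] at hfinal
    linarith
  calc m * ((K : ℝ) * α (K - 1)) = (K : ℝ) * α (K - 1) * m := by ring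
    _ ≤ 2 * E * (δ 0 + L * C' / 2 * Q) := h2
    _ = E * (2 * δ 0 + L * C' * Q) := by ring
end

section
/- Let (Ω, F, P) be a probability space with a filtration (F_k)_{k≥0}. Let d ≥ 1, let F : ℝ^d → ℝ be differentiable with L-Lipschitz gradient (L > 0) and bounded below by F_low. Fix α ∈ [0, π/2), nonnegative constants E', A, B, C with B·E' > 0, and p ∈ (1/2, 1), and set α_k := (1 − sin α)/(L·B·E'·(k+1)^p) for all k ≥ 0. Let (w_k)_{k≥0}, (A_k)_{k≥0}, (G_k)_{k≥0} be sequences of ℝ^d-valued random vectors with w_k F_k-measurable, ‖A_k‖² and ‖G_k‖² integrable, and w_{k+1} = w_k − α_k·A_k. Suppose for every k ≥ 0, almost surely: (i) ⟨E[A_k | F_k], ∇F(w_k)⟩ ≥ (1 − sin α)·‖∇F(w_k)‖²; (ii) E[‖A_k‖² | F_k] ≤ E'·E[‖G_k‖² | F_k]; (iii) E[G_k | F_k] = ∇F(w_k); (iv) E[‖G_k‖² | F_k] ≤ 2·A·(F(w_k) − F_low) + B·‖∇F(w_k)‖² + C. Define A' := A·E', C' := C·E', δ_0 := F(w_0) −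 F_low (assuming w_0 is deterministic) and Q_K := ∑_{k=0}^{K-1} α_k². Then for every K ≥ 1, min_{0 ≤ k ≤ K-1} E[‖∇F(w_k)‖] ≤ ( exp(L·A'·Q_K)·(2·δ_0 + L·C'·Q_K) / ((1 − sin α)·K·α_{K-1}) )^{1/2}. -/
open MeasureTheory Filter
open scoped RealInnerProductSpace

/-- Conditional expectation commutes with continuous linear maps. -/
theorem condexp_clm_comm {α : Type*} {m m0 : MeasurableSpace α} {μ : Measure α}
    (hm : m ≤ m0) [SigmaFinite (μ.trim hm)]
    {E F : Type*} [NormedAddCommGroup E] [NormedSpace ℝ E] [CompleteSpace E]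
    [NormedAddCommGroup F] [NormedSpace ℝ F] [CompleteSpace F]
    (T : E →L[ℝ] F) {f : α → E} (hf : Integrable f μ) :
    (fun ω => T ((μ[f|m]) ω)) =ᵐ[μ] μ[fun ω => T (f ω)|m] := by
  refine ae_eq_condExp_of_forall_setIntegral_eq hm (T.integrable_comp hf)
    (fun s _ _ => (T.integrable_comp integrable_condExp).integrableOn)
    (fun s hs hμs => ?_)
    ((T.continuous.comp_stronglyMeasurable stronglyMeasurable_condExp).aestronglyMeasurable)
  rw [T.integral_comp_comm integrable_condExp.integrableOn,
    T.integral_comp_comm hf.integrableOn, setIntegral_condExp hm hf hs]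

theorem euclid_abs_coord_le_norm {d : ℕ} (x : EuclideanSpace ℝ (Fin d)) (i : Fin d) :
    |x i| ≤ ‖x‖ := by
  rw [EuclideanSpace.norm_eq, ← Real.sqrt_sq_eq_abs (x i)]
  refine Real.sqrt_le_sqrt ?_
  have : |x i| ^ 2 ≤ ∑ j, ‖x j‖ ^ 2 := by
    have := Finset.single_le_sum (f := fun j => ‖x j‖ ^ 2)
      (fun j _ => by positivity) (Finset.mem_univ i)
    simpa [Real.norm_eq_abs, sq_abs] using this
  simpa [sq_abs] using this

/-- `∫ ⟪X, E[A|m]⟫ = ∫ ⟪X, A⟫` for `m`-measurable square-integrable `X` and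
square-integrable `A`, together with the integrability of the integrand. -/
theorem integral_inner_condexp {Ω : Type*} {m m0 : MeasurableSpace Ω} {μ : Measure Ω}
    [IsProbabilityMeasure μ] (hm : m ≤ m0) {d : ℕ}
    {X A : Ω → EuclideanSpace ℝ (Fin d)}
    (hX : StronglyMeasurable[m] X) (hXsq : Integrable (fun ω => ‖X ω‖ ^ 2) μ)
    (hA_meas : AEStronglyMeasurable A μ) (hAsq : Integrable (fun ω => ‖A ω‖ ^ 2) μ) :
    Integrable (fun ω => ⟪X ω, (μ[A|m]) ω⟫) μ ∧
    ∫ ω, ⟪X ω, (μ[A|m]) ω⟫ ∂μ = ∫ ω, ⟪X ω, A ω⟫ ∂μ := by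
  haveI : SigmaFinite (μ.trim hm) := by
    have : IsFiniteMeasure (μ.trim hm) := isFiniteMeasure_trim hm
    infer_instance
  have hA_int : Integrable A μ :=
    ((memLp_two_iff_integrable_sq_norm hA_meas).mpr hAsq).integrable one_le_two
  have hX_meas : AEStronglyMeasurable X μ := (hX.mono hm).aestronglyMeasurable
  have hmul_int : ∀ i : Fin d, Integrable (fun ω => X ω i * A ω i) μ := by
    intro i
    refine Integrable.mono' ((hXsq.add hAsq).const_mul (1/2))
      (((EuclideanSpace.proj (𝕜 := ℝ) i).continuous.comp_aestronglyMeasurable hX_meas).mul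
        ((EuclideanSpace.proj (𝕜 := ℝ) i).continuous.comp_aestronglyMeasurable hA_meas))
      (ae_of_all _ fun ω => ?_)
    have h1 := euclid_abs_coord_le_norm (X ω) i
    have h2 := euclid_abs_coord_le_norm (A ω) i
    have : ‖X ω i * A ω i‖ = |X ω i| * |A ω i| := by
      rw [Real.norm_eq_abs, abs_mul]
    rw [this]
    have hb : |X ω i| * |A ω i| ≤ ‖X ω‖ * ‖A ω‖ :=
      mul_le_mul h1 h2 (abs_nonneg _) (norm_nonneg _)
    simp only [Pi.add_apply]
    nlinarith [norm_nonneg (X ω), norm_nonneg (A ω), sq_nonneg (‖X ω‖ - ‖A ω‖)]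
  have hXi : ∀ i : Fin d, StronglyMeasurable[m] (fun ω => X ω i) :=
    fun i => ((EuclideanSpace.proj i).continuous.comp_stronglyMeasurable hX)
  have hAi_int : ∀ i : Fin d, Integrable (fun ω => A ω i) μ := fun i => by
    simpa using (EuclideanSpace.proj (𝕜 := ℝ) i).integrable_comp hA_int
  have hpull : ∀ i : Fin d,
      (fun ω => X ω i * (μ[fun ω' => A ω' i|m]) ω) =ᵐ[μ] μ[fun ω => X ω i * A ω i|m] := by
    intro i
    exact (condExp_mul_of_stronglyMeasurable_left (hXi i) (hmul_int i) (hAi_int i)).symm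
  have hcoord : ∀ i : Fin d,
      (fun ω => (μ[A|m]) ω i) =ᵐ[μ] μ[fun ω => A ω i|m] := fun i => by
    simpa using condexp_clm_comm hm (EuclideanSpace.proj (𝕜 := ℝ) i) hA_int
  have hae : (fun ω => ⟪X ω, (μ[A|m]) ω⟫) =ᵐ[μ]
      (fun ω => ∑ i : Fin d, (μ[fun ω' => X ω' i * A ω' i|m]) ω) := by
    have h := eventually_all.mpr (fun i : Fin d => ((hcoord i).and (hpull i)))
    filter_upwards [h] with ω hω
    rw [PiLp.inner_apply]
    simp only [RCLike.inner_apply, conj_trivial]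
    refine Finset.sum_congr rfl fun i _ => ?_
    have h1 := (hω i).1
    have h2 := (hω i).2
    rw [mul_comm]
    calc X ω i * (μ[A|m]) ω i = X ω i * (μ[fun ω' => A ω' i|m]) ω := by rw [h1]
      _ = (μ[fun ω' => X ω' i * A ω' i|m]) ω := h2
  have hint_sum : Integrable (fun ω => ∑ i : Fin d, (μ[fun ω' => X ω' i * A ω' i|m]) ω) μ :=
    integrable_finset_sum _ fun i _ => integrable_condExp
  refine ⟨hint_sum.congr hae.symm, ?_⟩
  rw [integral_congr_ae hae, integral_finset_sum _ fun i _ => integrable_condExp]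
  have : ∀ i : Fin d, ∫ ω, (μ[fun ω' => X ω' i * A ω' i|m]) ω ∂μ = ∫ ω, X ω i * A ω i ∂μ :=
    fun i => integral_condExp hm
  rw [Finset.sum_congr rfl fun i _ => this i, ← integral_finset_sum _ fun i _ => hmul_int i]
  refine integral_congr_ae (ae_of_all _ fun ω => ?_)
  simp [PiLp.inner_apply, RCLike.inner_apply, mul_comm]

/-- Descent lemma for functions with Lipschitz gradient. -/
theorem descent_lemma {E : Type*} [NormedAddCommGroup E] [InnerProductSpace ℝ E]
    [CompleteSpace E]
    (F : E → ℝ) (hF : Differentiable ℝ F) (L : ℝ) (hL : 0 ≤ L)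
    (hlip : ∀ x y, ‖gradient F x - gradient F y‖ ≤ L * ‖x - y‖) (x y : E) :
    F y ≤ F x + ⟪gradient F x, y - x⟫ + L / 2 * ‖y - x‖ ^ 2 := by
  set v := y - x with hv
  have hgc : Continuous (gradient F) := by
    have : LipschitzWith (Real.toNNReal L) (gradient F) := by
      refine LipschitzWith.of_dist_le_mul fun a b => ?_
      rw [dist_eq_norm, dist_eq_norm, Real.coe_toNNReal L hL]
      exact hlip a b
    exact this.continuous
  have hderiv : ∀ t : ℝ, HasDerivAt (fun t : ℝ => F (x + t • v))
      (⟪gradient F (x + t • v), v⟫) t := by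
    intro t
    have hc : HasDerivAt (fun t : ℝ => x + t • v) v t := by
      simpa using ((hasDerivAt_id t).smul_const v).const_add x
    have hg : HasFDerivAt F (InnerProductSpace.toDual ℝ E (gradient F (x + t • v)))
        (x + t • v) := (hF _).hasGradientAt.hasFDerivAt
    have := hg.comp_hasDerivAt t hc
    simp only [InnerProductSpace.toDual_apply_apply] at this
    exact this
  have hcont : Continuous fun t : ℝ => ⟪gradient F (x + t • v), v⟫ := by
    exact (hgc.comp (by continuity)).inner continuous_const
  have hFTC : F (x + (1:ℝ) • v) - F (x + (0:ℝ) • v) =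
      ∫ t in (0:ℝ)..1, ⟪gradient F (x + t • v), v⟫ := by
    rw [intervalIntegral.integral_eq_sub_of_hasDerivAt
      (fun t _ => hderiv t) (hcont.intervalIntegrable 0 1)]
  have hmono : (∫ t in (0:ℝ)..1, ⟪gradient F (x + t • v), v⟫) ≤
      ∫ t in (0:ℝ)..1, (⟪gradient F x, v⟫ + L * t * ‖v‖ ^ 2) := by
    refine intervalIntegral.integral_mono_on (by norm_num)
      (hcont.intervalIntegrable 0 1) (by apply Continuous.intervalIntegrable; continuity)
      (fun t ht => ?_)
    have h1 : ⟪gradient F (x + t • v), v⟫ - ⟪gradient F x, v⟫ ≤ L * t * ‖v‖ ^ 2 := by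
      have := abs_real_inner_le_norm (gradient F (x + t • v) - gradient F x) v
      have h2 := hlip (x + t • v) x
      have h3 : ‖x + t • v - x‖ = t * ‖v‖ := by
        simp [norm_smul, abs_of_nonneg ht.1]
      rw [inner_sub_left] at this
      have habs : ⟪gradient F (x + t • v), v⟫ - ⟪gradient F x, v⟫ ≤
          ‖gradient F (x + t • v) - gradient F x‖ * ‖v‖ := le_trans (le_abs_self _) this
      calc ⟪gradient F (x + t • v), v⟫ - ⟪gradient F x, v⟫ ≤
          ‖gradient F (x + t • v) - gradient F x‖ * ‖v‖ := habs
        _ ≤ (L * (t * ‖v‖)) * ‖v‖ := by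
            refine mul_le_mul_of_nonneg_right ?_ (norm_nonneg _)
            rw [h3] at h2; exact h2
        _ = L * t * ‖v‖ ^ 2 := by ring
    linarith
  have hint : (∫ t in (0:ℝ)..1, (⟪gradient F x, v⟫ + L * t * ‖v‖ ^ 2)) =
      ⟪gradient F x, v⟫ + L / 2 * ‖v‖ ^ 2 := by
    rw [intervalIntegral.integral_add (by apply Continuous.intervalIntegrable; continuity)
      (by apply Continuous.intervalIntegrable; continuity)]
    simp only [intervalIntegral.integral_const]
    have : (∫ t in (0:ℝ)..1, L * t * ‖v‖ ^ 2) = L / 2 * ‖v‖ ^ 2 := by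
      have : (fun t : ℝ => L * t * ‖v‖ ^ 2) = fun t : ℝ => (L * ‖v‖ ^ 2) * t := by
        funext t; ring
      rw [this, intervalIntegral.integral_const_mul, integral_id]
      ring
    rw [this]; simp
  have := hFTC.trans_le (hmono.trans_eq hint)
  have hx0 : x + (0:ℝ) • v = x := by simp
  have hx1 : x + (1:ℝ) • v = y := by simp [hv]
  rw [hx0, hx1] at this
  linarith

theorem sq_integral_le_integral_sq' {Ω : Type*} {mΩ : MeasurableSpace Ω} {μ : Measure Ω}
    [IsProbabilityMeasure μ] {f : Ω → ℝ} (hf : Integrable f μ)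
    (hf2 : Integrable (fun ω => f ω ^ 2) μ) :
    (∫ ω, f ω ∂μ) ^ 2 ≤ ∫ ω, f ω ^ 2 ∂μ := by
  set m := ∫ ω, f ω ∂μ with hm
  have h1 : Integrable (fun ω => f ω ^ 2 - 2 * m * f ω) μ := hf2.sub (hf.const_mul (2 * m))
  have h0 : 0 ≤ ∫ ω, (f ω - m) ^ 2 ∂μ := integral_nonneg fun ω => sq_nonneg _
  have hexp : ∫ ω, (f ω - m) ^ 2 ∂μ = ∫ ω, f ω ^ 2 ∂μ - 2 * m * m + m ^ 2 := by
    calc ∫ ω, (f ω - m) ^ 2 ∂μ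
        = ∫ ω, (f ω ^ 2 - 2 * m * f ω) + m ^ 2 ∂μ := by
          refine integral_congr_ae (Filter.EventuallyEq.of_eq (funext fun ω => by ring))
      _ = (∫ ω, f ω ^ 2 - 2 * m * f ω ∂μ) + ∫ _ω, m ^ 2 ∂μ := integral_add h1 (integrable_const _)
      _ = (∫ ω, f ω ^ 2 ∂μ) - (∫ ω, 2 * m * f ω ∂μ) + m ^ 2 := by
          rw [integral_sub hf2 (hf.const_mul (2 * m)), integral_const]
          simp [measure_univ]
      _ = ∫ ω, f ω ^ 2 ∂μ - 2 * m * m + m ^ 2 := by rw [integral_const_mul]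
  nlinarith [h0, hexp]

set_option maxHeartbeats 1600000 in
/-- Corollary 2 of the paper: explicit convergence-rate bound for
Byzantine Resilient SGD with learning rates `α_k = (1 - sin α)/(L·B·E'·(k+1)^p)`,
where `A' := A·E'`, `C' := C·E'`, `δ_0 := F(w_0) - F_low` (with `w_0` deterministic)
and `Q_K := ∑_{k<K} α_k²`. -/
theorem brsgd_rate_bound
    {Ω : Type*} {mΩ : MeasurableSpace Ω} {μ : Measure Ω} [IsProbabilityMeasure μ]
    (ℱ : Filtration ℕ mΩ)
    (d : ℕ) (hd : 1 ≤ d)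
    (F : EuclideanSpace ℝ (Fin d) → ℝ) (L : ℝ) (hL : 0 < L)
    (hF_diff : Differentiable ℝ F)
    (hF_lip : ∀ x y, ‖gradient F x - gradient F y‖ ≤ L * ‖x - y‖)
    (Flow : ℝ) (hF_low : ∀ x, Flow ≤ F x)
    (α : ℝ) (hα0 : 0 ≤ α) (hα1 : α < Real.pi / 2)
    (E' A B C : ℝ) (hE' : 0 ≤ E') (hA : 0 ≤ A) (hB : 0 ≤ B) (hC : 0 ≤ C)
    (hBE' : 0 < B * E') (p : ℝ) (hp1 : 1 / 2 < p) (hp2 : p < 1)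
    (lr : ℕ → ℝ)
    (hlr : ∀ k : ℕ, lr k = (1 - Real.sin α) / (L * B * E' * ((k : ℝ) + 1) ^ p))
    (w Agg G : ℕ → Ω → EuclideanSpace ℝ (Fin d))
    (hw_meas : ∀ k, StronglyMeasurable[ℱ k] (w k))
    (hAgg_int : ∀ k, Integrable (fun ω => ‖Agg k ω‖ ^ 2) μ)
    (hG_int : ∀ k, Integrable (fun ω => ‖G k ω‖ ^ 2) μ)
    (hupdate : ∀ k, ∀ ω, w (k + 1) ω = w k ω - lr k • Agg k ω)
    (hi : ∀ k, ∀ᵐ ω ∂μ,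
      ⟪(μ[Agg k|ℱ k]) ω, gradient F (w k ω)⟫ ≥
        (1 - Real.sin α) * ‖gradient F (w k ω)‖ ^ 2)
    (hii : ∀ k, ∀ᵐ ω ∂μ,
      (μ[(fun ω' => ‖Agg k ω'‖ ^ 2)|ℱ k]) ω ≤ E' * (μ[(fun ω' => ‖G k ω'‖ ^ 2)|ℱ k]) ω)
    (hiii : ∀ k, ∀ᵐ ω ∂μ, (μ[G k|ℱ k]) ω = gradient F (w k ω))
    (hiv : ∀ k, ∀ᵐ ω ∂μ,
      (μ[(fun ω' => ‖G k ω'‖ ^ 2)|ℱ k]) ω ≤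
        2 * A * (F (w k ω) - Flow) + B * ‖gradient F (w k ω)‖ ^ 2 + C)
    (w0 : EuclideanSpace ℝ (Fin d)) (hw0 : ∀ ω, w 0 ω = w0)
    (K : ℕ) (hK : 1 ≤ K) :
    (⨅ k : Fin K, ∫ ω, ‖gradient F (w k ω)‖ ∂μ) ≤
      (Real.exp (L * (A * E') * ∑ k ∈ Finset.range K, (lr k) ^ 2) *
          (2 * (F w0 - Flow) + L * (C * E') * ∑ k ∈ Finset.range K, (lr k) ^ 2) /
        ((1 - Real.sin α) * (K : ℝ) * lr (K - 1))) ^ ((1 : ℝ) / 2) := by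
  -- basic facts about sin α and the learning rates
  have hπ := Real.pi_pos
  have hs'0 : 0 ≤ Real.sin α := Real.sin_nonneg_of_nonneg_of_le_pi hα0 (by linarith)
  have hs'1 : Real.sin α < 1 := by
    have := Real.sin_lt_sin_of_lt_of_le_pi_div_two (x := α) (y := Real.pi / 2)
      (by linarith) le_rfl hα1
    simpa [Real.sin_pi_div_two] using this
  have hs0 : 0 < 1 - Real.sin α := by linarith
  have hLBE : 0 < L * B * E' := by rw [mul_assoc]; exact mul_pos hL hBE'
  have hrp : ∀ k : ℕ, (0:ℝ) < ((k : ℝ) + 1) ^ p :=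
    fun k => Real.rpow_pos_of_pos (by positivity) p
  have hrp1 : ∀ k : ℕ, (1:ℝ) ≤ ((k : ℝ) + 1) ^ p :=
    fun k => Real.one_le_rpow (by linarith [show (0:ℝ) ≤ (k:ℝ) from Nat.cast_nonneg k]) (by linarith)
  have hlr_pos : ∀ k, 0 < lr k := by
    intro k; rw [hlr k]; exact div_pos hs0 (mul_pos hLBE (hrp k))
  have hlr_key : ∀ k, L * B * E' * lr k ≤ 1 - Real.sin α := by
    intro k
    rw [hlr k]
    have h1 : L * B * E' * ((1 - Real.sin α) / (L * B * E' * ((k : ℝ) + 1) ^ p)) =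
        (1 - Real.sin α) / (((k : ℝ) + 1) ^ p) := by
      field_simp [left_ne_zero_of_mul hBE'.ne', right_ne_zero_of_mul hBE'.ne']
    rw [h1]
    exact div_le_self hs0.le (hrp1 k)
  have hlr_anti : ∀ j k : ℕ, j ≤ k → lr k ≤ lr j := by
    intro j k hjk
    rw [hlr j, hlr k]
    have hd1 : L * B * E' * ((j : ℝ) + 1) ^ p ≤ L * B * E' * ((k : ℝ) + 1) ^ p := by
      refine mul_le_mul_of_nonneg_left ?_ hLBE.le
      exact Real.rpow_le_rpow (by positivity) (by push_cast; norm_num; exact_mod_cast hjk)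
        (by linarith)
    exact div_le_div_of_nonneg_left hs0.le (mul_pos hLBE (hrp j)) hd1
  -- measurability and integrability ladder
  have hw_meas' : ∀ k, StronglyMeasurable (w k) := fun k => (hw_meas k).mono (ℱ.le k)
  have hgc : Continuous (gradient F) := by
    have : LipschitzWith (Real.toNNReal L) (gradient F) := by
      refine LipschitzWith.of_dist_le_mul fun a b => ?_
      rw [dist_eq_norm, dist_eq_norm, Real.coe_toNNReal L hL.le]
      exact hF_lip a b
    exact this.continuous
  have hAgg_eq : ∀ k, Agg k = fun ω => (lr k)⁻¹ • (w k ω - w (k+1) ω) := by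
    intro k; funext ω
    rw [hupdate k ω, sub_sub_cancel, smul_smul, inv_mul_cancel₀ (hlr_pos k).ne', one_smul]
  have hAgg_meas : ∀ k, AEStronglyMeasurable (Agg k) μ := by
    intro k; rw [hAgg_eq k]
    exact (((hw_meas' k).sub (hw_meas' (k+1))).const_smul (lr k)⁻¹).aestronglyMeasurable
  have hAgg_L2 : ∀ k, MemLp (Agg k) 2 μ :=
    fun k => (memLp_two_iff_integrable_sq_norm (hAgg_meas k)).mpr (hAgg_int k)
  have hw_L2 : ∀ k, MemLp (w k) 2 μ := by
    intro k
    induction k with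
    | zero =>
      have : w 0 = fun _ => w0 := funext hw0
      rw [this]; exact memLp_const w0
    | succ n ih =>
      have : w (n+1) = fun ω => w n ω - lr n • Agg n ω := funext (hupdate n)
      rw [this]
      exact ih.sub ((hAgg_L2 n).const_smul (lr n))
  have hXk_meas : ∀ k, StronglyMeasurable[ℱ k] (fun ω => gradient F (w k ω)) :=
    fun k => hgc.comp_stronglyMeasurable (hw_meas k)
  have hgradw_L2 : ∀ k, MemLp (fun ω => gradient F (w k ω)) 2 μ := by
    intro k
    refine MemLp.of_le
      ((memLp_const ‖gradient F w0‖).add (((hw_L2 k).sub (memLp_const w0)).norm.const_mul L))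
      ((hXk_meas k).mono (ℱ.le k)).aestronglyMeasurable (ae_of_all _ fun ω => ?_)
    have hl := hF_lip (w k ω) w0
    have htr : ‖gradient F (w k ω)‖ - ‖gradient F w0‖ ≤ ‖gradient F (w k ω) - gradient F w0‖ :=
      norm_sub_norm_le _ _
    have hnn : (0:ℝ) ≤ ‖gradient F w0‖ + L * ‖w k ω - w0‖ := by positivity
    have : ‖gradient F (w k ω)‖ ≤ ‖gradient F w0‖ + L * ‖w k ω - w0‖ := by linarith
    calc ‖gradient F (w k ω)‖ ≤ ‖gradient F w0‖ + L * ‖w k ω - w0‖ := this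
      _ ≤ ‖(fun ω' => ‖gradient F w0‖ + L * ‖w k ω' - w0‖) ω‖ := le_abs_self _
  have hgsq_int : ∀ k, Integrable (fun ω => ‖gradient F (w k ω)‖ ^ 2) μ :=
    fun k => (memLp_two_iff_integrable_sq_norm (hgradw_L2 k).aestronglyMeasurable).mp
      (hgradw_L2 k)
  have hgrad1_int : ∀ k, Integrable (fun ω => ‖gradient F (w k ω)‖) μ :=
    fun k => ((hgradw_L2 k).integrable one_le_two).norm
  have hwsub_L2 : ∀ k, MemLp (fun ω => w k ω - w0) 2 μ :=
    fun k => (hw_L2 k).sub (memLp_const w0)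
  have hnorm_int : ∀ k, Integrable (fun ω => ‖w k ω - w0‖) μ :=
    fun k => ((hwsub_L2 k).integrable one_le_two).norm
  have hnormsq_int : ∀ k, Integrable (fun ω => ‖w k ω - w0‖ ^ 2) μ :=
    fun k => (memLp_two_iff_integrable_sq_norm (hwsub_L2 k).aestronglyMeasurable).mp
      (hwsub_L2 k)
  have hFw_meas : ∀ k, AEStronglyMeasurable (fun ω => F (w k ω)) μ :=
    fun k => (hF_diff.continuous.comp_stronglyMeasurable (hw_meas' k)).aestronglyMeasurable
  have hFw_int : ∀ k, Integrable (fun ω => F (w k ω)) μ := by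
    intro k
    refine Integrable.mono'
      (g := fun ω => |Flow| + (|F w0| + ‖gradient F w0‖ * ‖w k ω - w0‖
        + L / 2 * ‖w k ω - w0‖ ^ 2)) ?_ (hFw_meas k) (ae_of_all _ fun ω => ?_)
    · exact (integrable_const _).add (((integrable_const _).add
        ((hnorm_int k).const_mul _)).add ((hnormsq_int k).const_mul _))
    · have hub := descent_lemma F hF_diff L hL.le hF_lip w0 (w k ω)
      have hip : ⟪gradient F w0, w k ω - w0⟫ ≤ ‖gradient F w0‖ * ‖w k ω - w0‖ :=
        real_inner_le_norm _ _
      have hlb := hF_low (w k ω)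
      have h1 : (0:ℝ) ≤ ‖gradient F w0‖ * ‖w k ω - w0‖ := by positivity
      have h2 : (0:ℝ) ≤ L / 2 * ‖w k ω - w0‖ ^ 2 := by positivity
      rw [Real.norm_eq_abs, abs_le]
      constructor
      · nlinarith [abs_nonneg (F w0), abs_nonneg Flow, neg_abs_le Flow, le_abs_self Flow,
          le_abs_self (F w0), neg_abs_le (F w0)]
      · nlinarith [abs_nonneg (F w0), abs_nonneg Flow, neg_abs_le Flow, le_abs_self Flow,
          le_abs_self (F w0), neg_abs_le (F w0)]
  have hinner_int : ∀ k, Integrable (fun ω => ⟪gradient F (w k ω), Agg k ω⟫) μ := by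
    intro k
    have hb : Integrable (fun ω => (1/2 : ℝ) *
        (‖gradient F (w k ω)‖ ^ 2 + ‖Agg k ω‖ ^ 2)) μ :=
      ((hgsq_int k).add (hAgg_int k)).const_mul _
    refine Integrable.mono' hb
      (AEStronglyMeasurable.inner ((hXk_meas k).mono (ℱ.le k)).aestronglyMeasurable
        (hAgg_meas k)) (ae_of_all _ fun ω => ?_)
    have h1 := abs_real_inner_le_norm (gradient F (w k ω)) (Agg k ω)
    rw [Real.norm_eq_abs]
    nlinarith [norm_nonneg (gradient F (w k ω)), norm_nonneg (Agg k ω),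
      sq_nonneg (‖gradient F (w k ω)‖ - ‖Agg k ω‖)]
  -- abbreviations
  set D : ℕ → ℝ := fun k => (∫ ω, F (w k ω) ∂μ) - Flow with hD
  set Bq : ℕ → ℝ := fun k => ∫ ω, ‖gradient F (w k ω)‖ ^ 2 ∂μ with hBq
  have hD_nonneg : ∀ k, 0 ≤ D k := by
    intro k
    have : (∫ _ω, Flow ∂μ) ≤ ∫ ω, F (w k ω) ∂μ :=
      integral_mono (integrable_const _) (hFw_int k) fun ω => hF_low _
    simp only [integral_const, measure_univ, probReal_univ, ENNReal.toReal_one, one_smul, smul_eq_mul, one_mul] at this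
    simp only [hD]
    linarith
  have hBq_nonneg : ∀ k, 0 ≤ Bq k := fun k => integral_nonneg fun ω => by positivity
  -- the one-step inequality
  have step : ∀ k, D (k+1) ≤ (1 + L * (A * E') * lr k ^ 2) * D k
      - ((1 - Real.sin α) * lr k / 2) * Bq k + (L * (C * E') / 2) * lr k ^ 2 := by
    intro k
    -- pointwise descent
    have hpt : ∀ ω, F (w (k+1) ω) ≤ F (w k ω) - lr k * ⟪gradient F (w k ω), Agg k ω⟫
        + L / 2 * lr k ^ 2 * ‖Agg k ω‖ ^ 2 := by
      intro ω
      have hdl := descent_lemma F hF_diff L hL.le hF_lip (w k ω) (w (k+1) ω)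
      have hdiff : w (k+1) ω - w k ω = (-(lr k)) • Agg k ω := by
        rw [hupdate k ω, neg_smul]; abel
      rw [hdiff, real_inner_smul_right, norm_smul] at hdl
      simp only [norm_neg, Real.norm_eq_abs, mul_pow, sq_abs] at hdl
      nlinarith [hdl]
    -- integrate
    have hRHS_int : Integrable (fun ω => F (w k ω) - lr k * ⟪gradient F (w k ω), Agg k ω⟫
        + L / 2 * lr k ^ 2 * ‖Agg k ω‖ ^ 2) μ :=
      ((hFw_int k).sub ((hinner_int k).const_mul _)).add ((hAgg_int k).const_mul _)
    have hI3 : Integrable (fun ω => lr k * ⟪gradient F (w k ω), Agg k ω⟫) μ :=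
      (hinner_int k).const_mul _
    have hI1 : Integrable (fun ω => F (w k ω) - lr k * ⟪gradient F (w k ω), Agg k ω⟫) μ :=
      (hFw_int k).sub hI3
    have hI2 : Integrable (fun ω => L / 2 * lr k ^ 2 * ‖Agg k ω‖ ^ 2) μ :=
      (hAgg_int k).const_mul _
    have hInt1 : (∫ ω, F (w (k+1) ω) ∂μ) ≤
        (∫ ω, F (w k ω) ∂μ) - lr k * (∫ ω, ⟪gradient F (w k ω), Agg k ω⟫ ∂μ)
        + L / 2 * lr k ^ 2 * (∫ ω, ‖Agg k ω‖ ^ 2 ∂μ) := by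
      have h := integral_mono (hFw_int (k+1)) hRHS_int hpt
      rwa [integral_add hI1 hI2, integral_sub (hFw_int k) hI3,
        integral_const_mul, integral_const_mul] at h
    -- bound on the inner-product integral
    have hIC := integral_inner_condexp (ℱ.le k) (hXk_meas k) (hgsq_int k)
      (hAgg_meas k) (hAgg_int k)
    have hInner_ge : (1 - Real.sin α) * Bq k ≤ ∫ ω, ⟪gradient F (w k ω), Agg k ω⟫ ∂μ := by
      rw [← hIC.2]
      have hle : (fun ω => (1 - Real.sin α) * ‖gradient F (w k ω)‖ ^ 2) ≤ᵐ[μ]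
          (fun ω => ⟪gradient F (w k ω), (μ[Agg k|ℱ k]) ω⟫) := by
        filter_upwards [hi k] with ω hω
        rw [real_inner_comm]
        exact hω
      have := integral_mono_ae ((hgsq_int k).const_mul _) hIC.1 hle
      rwa [integral_const_mul] at this
    -- bound on the aggregated second moment
    have hAgg_bound : (∫ ω, ‖Agg k ω‖ ^ 2 ∂μ) ≤ E' * (2 * A * D k + B * Bq k + C) := by
      have hrhs_int : Integrable (fun ω => 2 * A * (F (w k ω) - Flow)
          + B * ‖gradient F (w k ω)‖ ^ 2 + C) μ :=
        ((((hFw_int k).sub (integrable_const Flow)).const_mul (2*A)).add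
          ((hgsq_int k).const_mul B)).add (integrable_const C)
      have e1 : (∫ ω, ‖Agg k ω‖ ^ 2 ∂μ) =
          ∫ ω, (μ[(fun ω' => ‖Agg k ω'‖ ^ 2)|ℱ k]) ω ∂μ := (integral_condExp (ℱ.le k)).symm
      have e2 : (∫ ω, (μ[(fun ω' => ‖Agg k ω'‖ ^ 2)|ℱ k]) ω ∂μ) ≤
          ∫ ω, E' * (μ[(fun ω' => ‖G k ω'‖ ^ 2)|ℱ k]) ω ∂μ :=
        integral_mono_ae integrable_condExp (integrable_condExp.const_mul E') (hii k)
      have e3 : (∫ ω, E' * (μ[(fun ω' => ‖G k ω'‖ ^ 2)|ℱ k]) ω ∂μ) =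
          E' * ∫ ω, (μ[(fun ω' => ‖G k ω'‖ ^ 2)|ℱ k]) ω ∂μ := integral_const_mul _ _
      have e4 : (∫ ω, (μ[(fun ω' => ‖G k ω'‖ ^ 2)|ℱ k]) ω ∂μ) ≤
          ∫ ω, (2 * A * (F (w k ω) - Flow) + B * ‖gradient F (w k ω)‖ ^ 2 + C) ∂μ :=
        integral_mono_ae integrable_condExp hrhs_int (hiv k)
      have hJ0 : Integrable (fun ω => F (w k ω) - Flow) μ :=
        (hFw_int k).sub (integrable_const Flow)
      have hJ1 : Integrable (fun ω => 2 * A * (F (w k ω) - Flow)) μ := hJ0.const_mul (2*A)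
      have hJ2 : Integrable (fun ω => B * ‖gradient F (w k ω)‖ ^ 2) μ :=
        (hgsq_int k).const_mul B
      have hJ12 : Integrable (fun ω => 2 * A * (F (w k ω) - Flow)
          + B * ‖gradient F (w k ω)‖ ^ 2) μ := hJ1.add hJ2
      have e5 : (∫ ω, (2 * A * (F (w k ω) - Flow) + B * ‖gradient F (w k ω)‖ ^ 2 + C) ∂μ) =
          2 * A * D k + B * Bq k + C := by
        rw [integral_add hJ12 (integrable_const C), integral_add hJ1 hJ2,
          integral_const_mul, integral_const_mul,
          integral_sub (hFw_int k) (integrable_const Flow), integral_const]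
        simp [measure_univ, hD, hBq]
      calc (∫ ω, ‖Agg k ω‖ ^ 2 ∂μ) ≤ E' * ∫ ω, (μ[(fun ω' => ‖G k ω'‖ ^ 2)|ℱ k]) ω ∂μ := by
            rw [e1, ← e3]; exact e2
        _ ≤ E' * (2 * A * D k + B * Bq k + C) := by
            refine mul_le_mul_of_nonneg_left ?_ hE'
            rw [← e5]; exact e4
    -- combine
    have hkey := hlr_key k
    have hlrp := hlr_pos k
    have hBqn := hBq_nonneg k
    have hAggn : 0 ≤ ∫ ω, ‖Agg k ω‖ ^ 2 ∂μ := integral_nonneg fun ω => by positivity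
    have hDk : D k = (∫ ω, F (w k ω) ∂μ) - Flow := rfl
    have hDk1 : D (k+1) = (∫ ω, F (w (k+1) ω) ∂μ) - Flow := rfl
    have hBqk : Bq k = ∫ ω, ‖gradient F (w k ω)‖ ^ 2 ∂μ := rfl
    rw [hDk, hDk1, hBqk]
    rw [hDk, hBqk] at hAgg_bound
    rw [hBqk] at hInner_ge
    nlinarith [hInt1, hInner_ge, hAgg_bound, mul_le_mul_of_nonneg_left hAgg_bound
        (by positivity : (0:ℝ) ≤ L / 2 * lr k ^ 2),
      mul_le_mul_of_nonneg_left hInner_ge hlrp.le,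
      mul_le_mul_of_nonneg_right (mul_le_mul_of_nonneg_right hkey hBqn) hlrp.le]
  -- telescoping by induction
  have main : ∀ n : ℕ, D n + ((1 - Real.sin α) / 2) * ∑ k ∈ Finset.range n, lr k * Bq k ≤
      (∏ k ∈ Finset.range n, (1 + L * (A * E') * lr k ^ 2)) *
        (D 0 + (L * (C * E') / 2) * ∑ k ∈ Finset.range n, lr k ^ 2) := by
    intro n
    induction n with
    | zero => simp
    | succ n ih =>
      have hterm : ∀ k : ℕ, (1:ℝ) ≤ 1 + L * (A * E') * lr k ^ 2 := by
        intro k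
        nlinarith [mul_nonneg (mul_nonneg hL.le (mul_nonneg hA hE')) (sq_nonneg (lr k))]
      have hP1 : (1:ℝ) ≤ ∏ k ∈ Finset.range n, (1 + L * (A * E') * lr k ^ 2) := by
        calc (1:ℝ) = ∏ _k ∈ Finset.range n, (1:ℝ) := by simp
          _ ≤ ∏ k ∈ Finset.range n, (1 + L * (A * E') * lr k ^ 2) :=
            Finset.prod_le_prod (fun k _ => zero_le_one) (fun k _ => hterm k)
      have hP1' : (1:ℝ) ≤ ∏ k ∈ Finset.range (n+1), (1 + L * (A * E') * lr k ^ 2) := by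
        calc (1:ℝ) = ∏ _k ∈ Finset.range (n+1), (1:ℝ) := by simp
          _ ≤ ∏ k ∈ Finset.range (n+1), (1 + L * (A * E') * lr k ^ 2) :=
            Finset.prod_le_prod (fun k _ => zero_le_one) (fun k _ => hterm k)
      have hSg : (0:ℝ) ≤ ∑ k ∈ Finset.range n, lr k * Bq k :=
        Finset.sum_nonneg fun k _ => mul_nonneg (hlr_pos k).le (hBq_nonneg k)
      have hQ : (0:ℝ) ≤ ∑ k ∈ Finset.range n, lr k ^ 2 :=
        Finset.sum_nonneg fun k _ => sq_nonneg _
      have hco : (0:ℝ) ≤ L * (C * E') / 2 := by positivity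
      rw [Finset.sum_range_succ, Finset.sum_range_succ, Finset.prod_range_succ]
      have e1 : D (n+1) + ((1 - Real.sin α) / 2) *
          ((∑ k ∈ Finset.range n, lr k * Bq k) + lr n * Bq n) ≤
          (1 + L * (A * E') * lr n ^ 2) *
            (D n + ((1 - Real.sin α) / 2) * ∑ k ∈ Finset.range n, lr k * Bq k)
          + (L * (C * E') / 2) * lr n ^ 2 := by
        have hstep := step n
        nlinarith [mul_nonneg (mul_nonneg (mul_nonneg hL.le (mul_nonneg hA hE'))
          (sq_nonneg (lr n))) (mul_nonneg hs0.le hSg)]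
      have e2 : (1 + L * (A * E') * lr n ^ 2) *
            (D n + ((1 - Real.sin α) / 2) * ∑ k ∈ Finset.range n, lr k * Bq k) ≤
          (1 + L * (A * E') * lr n ^ 2) *
            ((∏ k ∈ Finset.range n, (1 + L * (A * E') * lr k ^ 2)) *
              (D 0 + (L * (C * E') / 2) * ∑ k ∈ Finset.range n, lr k ^ 2)) :=
        mul_le_mul_of_nonneg_left ih (by linarith [hterm n])
      have e3 : (L * (C * E') / 2) * lr n ^ 2 ≤
          ((∏ k ∈ Finset.range n, (1 + L * (A * E') * lr k ^ 2)) *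
            (1 + L * (A * E') * lr n ^ 2)) * ((L * (C * E') / 2) * lr n ^ 2) := by
        refine le_mul_of_one_le_left (by positivity) ?_
        calc (1:ℝ) ≤ ∏ k ∈ Finset.range (n+1), (1 + L * (A * E') * lr k ^ 2) := hP1'
          _ = (∏ k ∈ Finset.range n, (1 + L * (A * E') * lr k ^ 2)) *
              (1 + L * (A * E') * lr n ^ 2) := Finset.prod_range_succ _ _
      calc D (n+1) + ((1 - Real.sin α) / 2) *
            ((∑ k ∈ Finset.range n, lr k * Bq k) + lr n * Bq n)
          ≤ (1 + L * (A * E') * lr n ^ 2) *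
              ((∏ k ∈ Finset.range n, (1 + L * (A * E') * lr k ^ 2)) *
                (D 0 + (L * (C * E') / 2) * ∑ k ∈ Finset.range n, lr k ^ 2))
            + (L * (C * E') / 2) * lr n ^ 2 := by linarith
        _ ≤ (1 + L * (A * E') * lr n ^ 2) *
              ((∏ k ∈ Finset.range n, (1 + L * (A * E') * lr k ^ 2)) *
                (D 0 + (L * (C * E') / 2) * ∑ k ∈ Finset.range n, lr k ^ 2))
            + ((∏ k ∈ Finset.range n, (1 + L * (A * E') * lr k ^ 2)) *
                (1 + L * (A * E') * lr n ^ 2)) * ((L * (C * E') / 2) * lr n ^ 2) := by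
            linarith
        _ = (∏ k ∈ Finset.range n, (1 + L * (A * E') * lr k ^ 2)) *
              (1 + L * (A * E') * lr n ^ 2) *
            (D 0 + (L * (C * E') / 2) *
              ((∑ k ∈ Finset.range n, lr k ^ 2) + lr n ^ 2)) := by ring
  -- bound the product by the exponential
  have hprod_le : (∏ k ∈ Finset.range K, (1 + L * (A * E') * lr k ^ 2)) ≤
      Real.exp (L * (A * E') * ∑ k ∈ Finset.range K, lr k ^ 2) := by
    have : ∀ k ∈ Finset.range K, (1 + L * (A * E') * lr k ^ 2) ≤
        Real.exp (L * (A * E') * lr k ^ 2) := by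
      intro k _
      have := Real.add_one_le_exp (L * (A * E') * lr k ^ 2)
      linarith
    calc (∏ k ∈ Finset.range K, (1 + L * (A * E') * lr k ^ 2))
        ≤ ∏ k ∈ Finset.range K, Real.exp (L * (A * E') * lr k ^ 2) :=
          Finset.prod_le_prod (fun k _ => by nlinarith [mul_nonneg (mul_nonneg hL.le (mul_nonneg hA hE')) (sq_nonneg (lr k))]) this
      _ = Real.exp (∑ k ∈ Finset.range K, L * (A * E') * lr k ^ 2) :=
          (Real.exp_sum _ _).symm
      _ = Real.exp (L * (A * E') * ∑ k ∈ Finset.range K, lr k ^ 2) := by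
          rw [← Finset.mul_sum]
  have hD0eq : D 0 = F w0 - Flow := by
    have : (fun ω => F (w 0 ω)) = fun _ : Ω => F w0 := funext fun ω => by rw [hw0 ω]
    simp only [hD, this, integral_const, measure_univ, probReal_univ, ENNReal.toReal_one, smul_eq_mul, one_mul]
  -- from `main` at `K`
  have hQK : (0:ℝ) ≤ ∑ k ∈ Finset.range K, lr k ^ 2 :=
    Finset.sum_nonneg fun k _ => sq_nonneg _
  have hsum_bound : ((1 - Real.sin α) / 2) * ∑ k ∈ Finset.range K, lr k * Bq k ≤
      Real.exp (L * (A * E') * ∑ k ∈ Finset.range K, lr k ^ 2) *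
        ((F w0 - Flow) + (L * (C * E') / 2) * ∑ k ∈ Finset.range K, lr k ^ 2) := by
    have h1 := main K
    have h2 : (∏ k ∈ Finset.range K, (1 + L * (A * E') * lr k ^ 2)) *
        (D 0 + (L * (C * E') / 2) * ∑ k ∈ Finset.range K, lr k ^ 2) ≤
        Real.exp (L * (A * E') * ∑ k ∈ Finset.range K, lr k ^ 2) *
        (D 0 + (L * (C * E') / 2) * ∑ k ∈ Finset.range K, lr k ^ 2) := by
      refine mul_le_mul_of_nonneg_right hprod_le ?_
      exact add_nonneg (hD_nonneg 0) (mul_nonneg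
        (div_nonneg (mul_nonneg hL.le (mul_nonneg hC hE')) (by norm_num)) hQK)
    rw [hD0eq] at h1 h2
    calc ((1 - Real.sin α) / 2) * ∑ k ∈ Finset.range K, lr k * Bq k
        ≤ D K + ((1 - Real.sin α) / 2) * ∑ k ∈ Finset.range K, lr k * Bq k :=
          le_add_of_nonneg_left (hD_nonneg K)
      _ ≤ _ := le_trans h1 h2
  -- lower bound the sum using the smallest learning rate
  have hlrK : ∀ k ∈ Finset.range K, lr (K - 1) * Bq k ≤ lr k * Bq k := by
    intro k hk
    have hkK : k < K := Finset.mem_range.mp hk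
    exact mul_le_mul_of_nonneg_right (hlr_anti k (K-1) (Nat.le_sub_one_of_lt hkK))
      (hBq_nonneg k)
  have hsum_ge : lr (K - 1) * ∑ k ∈ Finset.range K, Bq k ≤
      ∑ k ∈ Finset.range K, lr k * Bq k := by
    rw [Finset.mul_sum]
    exact Finset.sum_le_sum hlrK
  -- the final quantity
  set R : ℝ := Real.exp (L * (A * E') * ∑ k ∈ Finset.range K, (lr k) ^ 2) *
      (2 * (F w0 - Flow) + L * (C * E') * ∑ k ∈ Finset.range K, (lr k) ^ 2) /
      ((1 - Real.sin α) * (K : ℝ) * lr (K - 1)) with hR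
  have hKpos : (0:ℝ) < (K : ℝ) := by exact_mod_cast hK
  have hlrK1 := hlr_pos (K - 1)
  have hsumBq_le : (∑ k ∈ Finset.range K, Bq k) ≤ (K : ℝ) * R := by
    have hden : (0:ℝ) < (1 - Real.sin α) * lr (K - 1) := mul_pos hs0 hlrK1
    have hKR : (K : ℝ) * R = Real.exp (L * (A * E') * ∑ k ∈ Finset.range K, (lr k) ^ 2) *
        (2 * (F w0 - Flow) + L * (C * E') * ∑ k ∈ Finset.range K, (lr k) ^ 2) /
        ((1 - Real.sin α) * lr (K - 1)) := by
      rw [hR]; field_simp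
    rw [hKR, le_div_iff₀ hden]
    have h1 : ((1 - Real.sin α) / 2) * (lr (K - 1) * ∑ k ∈ Finset.range K, Bq k) ≤
        ((1 - Real.sin α) / 2) * ∑ k ∈ Finset.range K, lr k * Bq k :=
      mul_le_mul_of_nonneg_left hsum_ge (by linarith)
    nlinarith [hsum_bound, h1]
  -- extract an index achieving the average bound
  have hex : ∃ k0 ∈ Finset.range K, Bq k0 ≤ R := by
    refine Finset.exists_le_of_sum_le ⟨0, Finset.mem_range.mpr hK⟩ ?_
    rw [Finset.sum_const, Finset.card_range, nsmul_eq_mul]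
    exact hsumBq_le
  obtain ⟨k0, hk0mem, hk0⟩ := hex
  have hk0K : k0 < K := Finset.mem_range.mp hk0mem
  -- conclude via Jensen and the infimum
  have hR_nonneg : 0 ≤ R := le_trans (hBq_nonneg k0) hk0
  have hfinal : (∫ ω, ‖gradient F (w k0 ω)‖ ∂μ) ≤ R ^ ((1:ℝ)/2) := by
    have hJ : (∫ ω, ‖gradient F (w k0 ω)‖ ∂μ) ^ 2 ≤ Bq k0 :=
      sq_integral_le_integral_sq' (hgrad1_int k0) (hgsq_int k0)
    have hnn : 0 ≤ ∫ ω, ‖gradient F (w k0 ω)‖ ∂μ :=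
      integral_nonneg fun ω => norm_nonneg _
    rw [← Real.sqrt_eq_rpow]
    calc (∫ ω, ‖gradient F (w k0 ω)‖ ∂μ)
        = Real.sqrt ((∫ ω, ‖gradient F (w k0 ω)‖ ∂μ) ^ 2) := (Real.sqrt_sq hnn).symm
      _ ≤ Real.sqrt (Bq k0) := Real.sqrt_le_sqrt hJ
      _ ≤ Real.sqrt R := Real.sqrt_le_sqrt hk0
  refine le_trans (ciInf_le ?_ (⟨k0, hk0K⟩ : Fin K)) ?_
  · exact ⟨0, by rintro x ⟨k, rfl⟩; exact integral_nonneg fun ω => norm_nonneg _⟩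
  · exact hfinal
end
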